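/- arXiv:1609.09182 — 6 statements merged into one kernel-verified Lean document; each statement's English description precedes it below -/
import Mathlib

section
/- In ℚ[[q]] one has the identity g_2 · g_3 = g_{2,3} + g_{3,2} + g_5 − (1/12)·g_3, where g_k(q) = Σ_{u,v ≥ 1} (v^{k-1}/(k-1)!) q^{uv} and g_{k_1,k_2}(q) = Σ_{0<u_1<u_2, v_1,v_2 ≥ 1} (v_1^{k_1-1} v_2^{k_2-1}/((k_1-1)!(k_2-1)!)) q^{u_1 v_1 + u_2 v_2}. -/
open Finset PowerSeries

/-- The `q`-series `g^{(d)}_k(q) = Σ_{u,v ≥ 1} (u^d/d!)(v^{k-1}/(k-1)!) q^{uv}` as a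
formal power series: the coefficient of `q^n` is the (finite) sum over divisors. -/
noncomputable def gb (d k : ℕ) : PowerSeries ℚ :=
  PowerSeries.mk fun n =>
    ∑ u ∈ n.divisors,
      ((u : ℚ) ^ d / (Nat.factorial d : ℚ)) *
        (((n / u : ℕ) : ℚ) ^ (k - 1) / (Nat.factorial (k - 1) : ℚ))

/-- `g_k = g^{(0)}_k`. -/
noncomputable def g (k : ℕ) : PowerSeries ℚ := gb 0 k

/-- The depth-two series `g^{(d₁,d₂)}_{k₁,k₂}`. -/
noncomputable def gb2 (d1 d2 k1 k2 : ℕ) : PowerSeries ℚ :=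
  PowerSeries.mk fun n =>
    ∑ u1 ∈ Finset.range (n+1), ∑ u2 ∈ Finset.range (n+1),
    ∑ v1 ∈ Finset.range (n+1), ∑ v2 ∈ Finset.range (n+1),
      if 0 < u1 ∧ u1 < u2 ∧ 0 < v1 ∧ 0 < v2 ∧ u1 * v1 + u2 * v2 = n then
        ((u1 : ℚ) ^ d1 / (Nat.factorial d1 : ℚ)) *
        ((u2 : ℚ) ^ d2 / (Nat.factorial d2 : ℚ)) *
        ((v1 : ℚ) ^ (k1 - 1) / (Nat.factorial (k1 - 1) : ℚ)) *
        ((v2 : ℚ) ^ (k2 - 1) / (Nat.factorial (k2 - 1) : ℚ))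
      else 0

/-- `g_{k₁,k₂} = g^{(0,0)}_{k₁,k₂}`. -/
noncomputable def g2 (k1 k2 : ℕ) : PowerSeries ℚ := gb2 0 0 k1 k2

/-- The depth-three series `g^{(d₁,d₂,d₃)}_{k₁,k₂,k₃}`. -/
noncomputable def gb3 (d1 d2 d3 k1 k2 k3 : ℕ) : PowerSeries ℚ :=
  PowerSeries.mk fun n =>
    ∑ u1 ∈ Finset.range (n+1), ∑ u2 ∈ Finset.range (n+1), ∑ u3 ∈ Finset.range (n+1),
    ∑ v1 ∈ Finset.range (n+1), ∑ v2 ∈ Finset.range (n+1), ∑ v3 ∈ Finset.range (n+1),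
      if 0 < u1 ∧ u1 < u2 ∧ u2 < u3 ∧ 0 < v1 ∧ 0 < v2 ∧ 0 < v3 ∧
          u1 * v1 + u2 * v2 + u3 * v3 = n then
        ((u1 : ℚ) ^ d1 / (Nat.factorial d1 : ℚ)) *
        ((u2 : ℚ) ^ d2 / (Nat.factorial d2 : ℚ)) *
        ((u3 : ℚ) ^ d3 / (Nat.factorial d3 : ℚ)) *
        ((v1 : ℚ) ^ (k1 - 1) / (Nat.factorial (k1 - 1) : ℚ)) *
        ((v2 : ℚ) ^ (k2 - 1) / (Nat.factorial (k2 - 1) : ℚ)) *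
        ((v3 : ℚ) ^ (k3 - 1) / (Nat.factorial (k3 - 1) : ℚ))
      else 0

/-- `g_{k₁,k₂,k₃} = g^{(0,0,0)}_{k₁,k₂,k₃}`. -/
noncomputable def g3 (k1 k2 k3 : ℕ) : PowerSeries ℚ := gb3 0 0 0 k1 k2 k3

/-- The shuffle-regularized series `g^sh_{k₁,k₂}`. -/
noncomputable def gsh2 (k1 k2 : ℕ) : PowerSeries ℚ :=
  g2 k1 k2 + (if k1 = 1 then (1/2 : ℚ) else 0) • (gb 1 k2 - g k2)

/-- The shuffle-regularized series `g^sh_{k₁,k₂,k₃}`. -/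
noncomputable def gsh3 (k1 k2 k3 : ℕ) : PowerSeries ℚ :=
  g3 k1 k2 k3
    + (if k1 = 1 then (1/2 : ℚ) else 0) • (gb2 1 0 k2 k3 - g2 k2 k3)
    + (if k2 = 1 then (1/2 : ℚ) else 0) • (gb2 0 1 k1 k3 - gb2 1 0 k1 k3 - g2 k1 k3)
    + (if k1 * k2 = 1 then (1 : ℚ) else 0) •
        ((1/6 : ℚ) • gb 2 k3 - (1/4 : ℚ) • gb 1 k3 + (1/6 : ℚ) • g k3)

/-- The operator `d̂ = q·d/dq` on formal power series. -/
noncomputable def qd (f : PowerSeries ℚ) : PowerSeries ℚ :=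
  PowerSeries.mk fun n => (n : ℚ) * PowerSeries.coeff n f


section StuffleAux

private lemma pow_s1 (v : ℕ) : ∑ j ∈ range v, (j:ℚ) = v*(v-1)/2 := by
  induction v with
  | zero => simp
  | succ k ih => rw [Finset.sum_range_succ, ih]; push_cast; ring

private lemma pow_s2 (v : ℕ) : ∑ j ∈ range v, (j:ℚ)^2 = v*(v-1)*(2*v-1)/6 := by
  induction v with
  | zero => simp
  | succ k ih => rw [Finset.sum_range_succ, ih]; push_cast; ring

private lemma pow_s3 (v : ℕ) : ∑ j ∈ range v, (j:ℚ)^3 = (v*(v-1)/2)^2 := by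
  induction v with
  | zero => simp
  | succ k ih => rw [Finset.sum_range_succ, ih]; push_cast; ring

private lemma sQ (v : ℕ) : ∑ j ∈ range v, (j:ℚ)*((v:ℚ)-j)^2/2 = ((v:ℚ)^4-(v:ℚ)^2)/24 := by
  have h : ∀ j ∈ range v, (j:ℚ)*((v:ℚ)-j)^2/2
      = (v:ℚ)^2/2 * (j:ℚ) - (v:ℚ)*(j:ℚ)^2 + (1/2)*(j:ℚ)^3 := fun j _ => by ring
  rw [Finset.sum_congr rfl h]
  rw [Finset.sum_add_distrib, Finset.sum_sub_distrib, ← Finset.mul_sum, ← Finset.mul_sum,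
    ← Finset.mul_sum, pow_s1, pow_s2, pow_s3]
  ring

private lemma divA (n m : ℕ) (hm : m ≤ n) (f : ℕ → ℕ → ℚ) :
    ∑ u ∈ m.divisors, f u (m / u) =
    ∑ u ∈ Finset.range (n+1), ∑ v ∈ Finset.range (n+1),
      if 0 < u ∧ 0 < v ∧ u * v = m then f u v else 0 := by
  have key : ∀ u, (∑ v ∈ Finset.range (n+1),
      if 0 < u ∧ 0 < v ∧ u * v = m then f u v else 0)
      = if u ∈ m.divisors then f u (m/u) else 0 := by
    intro u
    have hcond : ∀ v, (0 < u ∧ 0 < v ∧ u * v = m) ↔ (u ∈ m.divisors ∧ v = m / u) := by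
      intro v
      constructor
      · rintro ⟨hu, hv, huv⟩
        have hdvd : u ∣ m := ⟨v, huv.symm⟩
        have hm0 : m ≠ 0 := by rw [← huv]; exact Nat.mul_ne_zero (by omega) (by omega)
        refine ⟨Nat.mem_divisors.2 ⟨hdvd, hm0⟩, ?_⟩
        rw [← huv, Nat.mul_div_cancel_left v hu]
      · rintro ⟨hu, rfl⟩
        obtain ⟨hdvd, hm0⟩ := Nat.mem_divisors.1 hu
        have hupos : 0 < u := Nat.pos_of_dvd_of_pos hdvd (Nat.pos_of_ne_zero hm0)
        exact ⟨hupos, Nat.div_pos (Nat.le_of_dvd (Nat.pos_of_ne_zero hm0) hdvd) hupos,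
          Nat.mul_div_cancel' hdvd⟩
    have h2 : ∀ v, (if 0 < u ∧ 0 < v ∧ u * v = m then f u v else 0)
        = if v = m/u then (if u ∈ m.divisors then f u v else 0) else 0 := by
      intro v
      by_cases h1 : u ∈ m.divisors <;> by_cases h2 : v = m/u <;>
        rw [if_congr (hcond v) rfl rfl] <;> simp [h1, h2]
    rw [Finset.sum_congr rfl fun v _ => h2 v, Finset.sum_ite_eq']
    have : m / u ∈ Finset.range (n+1) := by
      simp only [Finset.mem_range]
      exact lt_of_le_of_lt (le_trans (Nat.div_le_self m u) hm) (Nat.lt_succ_self n)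
    simp [this]
  rw [Finset.sum_congr rfl fun u _ => key u, Finset.sum_ite_mem]
  rw [Finset.inter_eq_right.2 ?_]
  intro u hu
  simp only [Finset.mem_range]
  exact lt_of_le_of_lt (le_trans (Nat.divisor_le hu) hm) (Nat.lt_succ_self n)

private lemma lemP (n : ℕ) (f1 f2 : ℕ → ℚ) :
    (∑ p ∈ Finset.HasAntidiagonal.antidiagonal n,
      (∑ u ∈ p.1.divisors, f1 (p.1 / u)) * (∑ u ∈ p.2.divisors, f2 (p.2 / u)))
    = ∑ u1 ∈ Finset.range (n+1), ∑ u2 ∈ Finset.range (n+1),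
      ∑ v1 ∈ Finset.range (n+1), ∑ v2 ∈ Finset.range (n+1),
        if 0 < u1 ∧ 0 < u2 ∧ 0 < v1 ∧ 0 < v2 ∧ u1 * v1 + u2 * v2 = n then
          f1 v1 * f2 v2 else 0 := by
  have step1 : ∀ p ∈ Finset.HasAntidiagonal.antidiagonal n,
      (∑ u ∈ p.1.divisors, f1 (p.1 / u)) * (∑ u ∈ p.2.divisors, f2 (p.2 / u))
      = ∑ u1 ∈ Finset.range (n+1), ∑ u2 ∈ Finset.range (n+1),
        ∑ v1 ∈ Finset.range (n+1), ∑ v2 ∈ Finset.range (n+1),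
          if (0 < u1 ∧ 0 < v1 ∧ u1 * v1 = p.1) ∧ (0 < u2 ∧ 0 < v2 ∧ u2 * v2 = p.2) then
            f1 v1 * f2 v2 else 0 := by
    intro p hp
    rw [Finset.HasAntidiagonal.mem_antidiagonal] at hp
    rw [divA n p.1 (by omega) (fun u v => f1 v), divA n p.2 (by omega) (fun u v => f2 v)]
    rw [Finset.sum_mul_sum]
    refine Finset.sum_congr rfl fun u1 _ => Finset.sum_congr rfl fun u2 _ => ?_
    rw [Finset.sum_mul_sum]
    refine Finset.sum_congr rfl fun v1 _ => Finset.sum_congr rfl fun v2 _ => ?_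
    by_cases h1 : 0 < u1 ∧ 0 < v1 ∧ u1 * v1 = p.1 <;>
      by_cases h2 : 0 < u2 ∧ 0 < v2 ∧ u2 * v2 = p.2 <;> simp [h1, h2]
  rw [Finset.sum_congr rfl step1]
  rw [Finset.sum_comm]
  refine Finset.sum_congr rfl fun u1 _ => ?_
  rw [Finset.sum_comm]
  refine Finset.sum_congr rfl fun u2 _ => ?_
  rw [Finset.sum_comm]
  refine Finset.sum_congr rfl fun v1 _ => ?_
  rw [Finset.sum_comm]
  refine Finset.sum_congr rfl fun v2 _ => ?_
  have h2 : ∀ p : ℕ × ℕ,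
      (if (0 < u1 ∧ 0 < v1 ∧ u1 * v1 = p.1) ∧ (0 < u2 ∧ 0 < v2 ∧ u2 * v2 = p.2) then
          f1 v1 * f2 v2 else 0)
      = if p = (u1 * v1, u2 * v2) then
          (if 0 < u1 ∧ 0 < u2 ∧ 0 < v1 ∧ 0 < v2 then f1 v1 * f2 v2 else 0) else 0 := by
    rintro ⟨a, b⟩
    by_cases hp : ((a, b) : ℕ × ℕ) = (u1 * v1, u2 * v2)
    · rw [if_pos hp]
      obtain ⟨ha, hb⟩ := Prod.mk.injEq .. ▸ hp
      subst ha; subst hb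
      by_cases hd : 0 < u1 ∧ 0 < u2 ∧ 0 < v1 ∧ 0 < v2
      · rw [if_pos hd, if_pos ⟨⟨hd.1, hd.2.2.1, rfl⟩, hd.2.1, hd.2.2.2, rfl⟩]
      · rw [if_neg hd, if_neg (fun h => hd ⟨h.1.1, h.2.1, h.1.2.1, h.2.2.1⟩)]
    · rw [if_neg hp, if_neg]
      intro h
      exact hp (by simp only [Prod.mk.injEq]; exact ⟨h.1.2.2.symm, h.2.2.2.symm⟩)
  rw [Finset.sum_congr rfl fun p _ => h2 p, Finset.sum_ite_eq']
  by_cases hs : u1 * v1 + u2 * v2 = n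
  · rw [if_pos (Finset.HasAntidiagonal.mem_antidiagonal.2 hs)]
    by_cases hc : 0 < u1 ∧ 0 < u2 ∧ 0 < v1 ∧ 0 < v2
    · rw [if_pos hc, if_pos ⟨hc.1, hc.2.1, hc.2.2.1, hc.2.2.2, hs⟩]
    · rw [if_neg hc, if_neg (fun h => hc ⟨h.1, h.2.1, h.2.2.1, h.2.2.2.1⟩)]
  · rw [if_neg (fun h => hs (Finset.HasAntidiagonal.mem_antidiagonal.1 h)),
      if_neg (fun h => hs h.2.2.2.2)]

private lemma swap4 {s : Finset ℕ} (F : ℕ → ℕ → ℕ → ℕ → ℚ) :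
    (∑ a ∈ s, ∑ b ∈ s, ∑ c ∈ s, ∑ d ∈ s, F a b c d)
    = ∑ a ∈ s, ∑ b ∈ s, ∑ c ∈ s, ∑ d ∈ s, F b a d c := by
  rw [Finset.sum_comm]
  exact Finset.sum_congr rfl fun a _ => Finset.sum_congr rfl fun b _ => Finset.sum_comm

private lemma split3 (u1 u2 v1 v2 n : ℕ) (c : ℚ) :
    (if 0 < u1 ∧ 0 < u2 ∧ 0 < v1 ∧ 0 < v2 ∧ u1 * v1 + u2 * v2 = n then c else 0)
    = (if 0 < u1 ∧ u1 < u2 ∧ 0 < v1 ∧ 0 < v2 ∧ u1 * v1 + u2 * v2 = n then c else 0)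
    + (if 0 < u2 ∧ u2 < u1 ∧ 0 < v1 ∧ 0 < v2 ∧ u1 * v1 + u2 * v2 = n then c else 0)
    + (if u1 = u2 ∧ 0 < u1 ∧ 0 < v1 ∧ 0 < v2 ∧ u1 * v1 + u2 * v2 = n then c else 0) := by
  by_cases h3 : 0 < v1 ∧ 0 < v2 ∧ u1 * v1 + u2 * v2 = n
  · obtain ⟨a, b, e⟩ := h3
    rcases Nat.lt_trichotomy u1 u2 with h | h | h
    · by_cases h1 : 0 < u1
      · rw [if_pos ⟨h1, h1.trans h, a, b, e⟩, if_pos ⟨h1, h, a, b, e⟩,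
          if_neg (by omega), if_neg (by omega)]
        ring
      · rw [if_neg (by omega), if_neg (by omega), if_neg (by omega), if_neg (by omega)]
        ring
    · by_cases h1 : 0 < u1
      · rw [if_pos ⟨h1, by omega, a, b, e⟩, if_neg (by omega), if_neg (by omega),
          if_pos ⟨h, h1, a, b, e⟩]
        ring
      · rw [if_neg (by omega), if_neg (by omega), if_neg (by omega), if_neg (by omega)]
        ring
    · by_cases h2 : 0 < u2
      · rw [if_pos ⟨h2.trans h, h2, a, b, e⟩, if_neg (by omega), if_pos ⟨h2, h, a, b, e⟩,
          if_neg (by omega)]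
        ring
      · rw [if_neg (by omega), if_neg (by omega), if_neg (by omega), if_neg (by omega)]
        ring
  · rw [if_neg (by tauto), if_neg (by tauto), if_neg (by tauto), if_neg (by tauto)]
    ring

private lemma lemB (n v : ℕ) (hv : 0 < v) (hvn : v ≤ n) :
    (∑ v1 ∈ Finset.range (n+1), ∑ v2 ∈ Finset.range (n+1),
      if 0 < v1 ∧ 0 < v2 ∧ v1 + v2 = v then (v1:ℚ) * ((v2:ℚ)^2/2) else 0)
    = ((v:ℚ)^4 - (v:ℚ)^2)/24 := by
  have key : ∀ v1, (∑ v2 ∈ Finset.range (n+1),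
      if 0 < v1 ∧ 0 < v2 ∧ v1 + v2 = v then (v1:ℚ) * ((v2:ℚ)^2/2) else 0)
      = if v1 < v then (v1:ℚ) * (((v - v1 : ℕ):ℚ)^2/2) else 0 := by
    intro v1
    have h2 : ∀ v2, (if 0 < v1 ∧ 0 < v2 ∧ v1 + v2 = v then (v1:ℚ) * ((v2:ℚ)^2/2) else 0)
        = if v2 = v - v1 then (if 0 < v1 ∧ v1 < v then (v1:ℚ) * ((v2:ℚ)^2/2) else 0) else 0 := by
      intro v2
      by_cases ha : 0 < v1 <;> by_cases hb : 0 < v2 <;> by_cases hc : v1 + v2 = v <;>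
        by_cases hd : v2 = v - v1 <;> by_cases he : v1 < v <;>
        simp_all <;> omega
    rw [Finset.sum_congr rfl fun v2 _ => h2 v2, Finset.sum_ite_eq']
    have hmem : v - v1 ∈ Finset.range (n+1) := by
      simp only [Finset.mem_range]; omega
    simp only [hmem, if_true]
    by_cases he : v1 < v
    · rcases Nat.eq_zero_or_pos v1 with h0 | h0
      · simp [h0, he]
      · simp [h0, he]
    · simp [he]
  rw [Finset.sum_congr rfl fun v1 _ => key v1]
  rw [← Finset.sum_subset (Finset.range_subset_range.2 (by omega : v ≤ n + 1))
      (fun x _ hx => by simp only [Finset.mem_range, not_lt] at hx; simp [Nat.not_lt.2 hx])]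
  have : ∀ j ∈ range v, (if j < v then (j:ℚ) * (((v - j : ℕ):ℚ)^2/2) else 0)
      = (j:ℚ)*((v:ℚ)-j)^2/2 := by
    intro j hj
    simp only [Finset.mem_range] at hj
    rw [if_pos hj, Nat.cast_sub hj.le]; ring
  rw [Finset.sum_congr rfl this, sQ]

private lemma diagD (n : ℕ) :
    (∑ u1 ∈ Finset.range (n+1), ∑ u2 ∈ Finset.range (n+1),
      ∑ v1 ∈ Finset.range (n+1), ∑ v2 ∈ Finset.range (n+1),
        if u1 = u2 ∧ 0 < u1 ∧ 0 < v1 ∧ 0 < v2 ∧ u1 * v1 + u2 * v2 = n then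
          (v1:ℚ) * ((v2:ℚ)^2/2) else 0)
    = ∑ u ∈ Finset.range (n+1), ∑ v ∈ Finset.range (n+1),
        if 0 < u ∧ 0 < v ∧ u * v = n then ((v:ℚ)^4 - (v:ℚ)^2)/24 else 0 := by
  refine Finset.sum_congr rfl fun u1 hu1 => ?_
  have pull : ∀ u2, (∑ v1 ∈ Finset.range (n+1), ∑ v2 ∈ Finset.range (n+1),
      if u1 = u2 ∧ 0 < u1 ∧ 0 < v1 ∧ 0 < v2 ∧ u1 * v1 + u2 * v2 = n then
        (v1:ℚ) * ((v2:ℚ)^2/2) else 0)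
      = if u2 = u1 then (∑ v1 ∈ Finset.range (n+1), ∑ v2 ∈ Finset.range (n+1),
          if 0 < u1 ∧ 0 < v1 ∧ 0 < v2 ∧ u1 * v1 + u1 * v2 = n then
            (v1:ℚ) * ((v2:ℚ)^2/2) else 0) else 0 := by
    intro u2
    by_cases h : u2 = u1
    · subst h
      rw [if_pos rfl]
      exact Finset.sum_congr rfl fun v1 _ => Finset.sum_congr rfl fun v2 _ =>
        if_congr (by tauto) rfl rfl
    · rw [if_neg h]
      exact Finset.sum_eq_zero fun v1 _ => Finset.sum_eq_zero fun v2 _ =>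
        if_neg (fun hc => h hc.1.symm)
  rw [Finset.sum_congr rfl fun u2 _ => pull u2, Finset.sum_ite_eq' _ u1, if_pos hu1]
  by_cases hu : 0 < u1
  · refine Eq.symm ?_
    have expand : ∀ v ∈ Finset.range (n+1),
        (if 0 < u1 ∧ 0 < v ∧ u1 * v = n then ((v:ℚ)^4 - (v:ℚ)^2)/24 else 0)
        = ∑ v1 ∈ Finset.range (n+1), ∑ v2 ∈ Finset.range (n+1),
            if (0 < u1 ∧ 0 < v ∧ u1 * v = n) ∧ (0 < v1 ∧ 0 < v2 ∧ v1 + v2 = v) then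
              (v1:ℚ) * ((v2:ℚ)^2/2) else 0 := by
      intro v _
      by_cases hc : 0 < u1 ∧ 0 < v ∧ u1 * v = n
      · rw [if_pos hc]
        have hvn : v ≤ n := by
          calc v ≤ u1 * v := Nat.le_mul_of_pos_left v hu
          _ = n := hc.2.2
        rw [← lemB n v hc.2.1 hvn]
        exact Finset.sum_congr rfl fun v1 _ => Finset.sum_congr rfl fun v2 _ =>
          (if_congr (by tauto) rfl rfl)
      · rw [if_neg hc]
        exact Eq.symm <| Finset.sum_eq_zero fun v1 _ => Finset.sum_eq_zero fun v2 _ =>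
          if_neg (fun h => hc h.1)
    rw [Finset.sum_congr rfl expand, Finset.sum_comm]
    refine Finset.sum_congr rfl fun v1 _ => ?_
    rw [Finset.sum_comm]
    refine Finset.sum_congr rfl fun v2 _ => ?_
    have h2 : ∀ v, (if (0 < u1 ∧ 0 < v ∧ u1 * v = n) ∧ (0 < v1 ∧ 0 < v2 ∧ v1 + v2 = v)
          then (v1:ℚ) * ((v2:ℚ)^2/2) else 0)
        = if v = v1 + v2 then
            (if 0 < u1 ∧ 0 < v1 ∧ 0 < v2 ∧ u1 * v1 + u1 * v2 = n then
              (v1:ℚ) * ((v2:ℚ)^2/2) else 0) else 0 := by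
      intro v
      by_cases hv : v = v1 + v2
      · subst hv
        rw [if_pos rfl]
        refine if_congr ?_ rfl rfl
        constructor
        · rintro ⟨⟨a, b, c⟩, d, e, -⟩
          exact ⟨a, d, e, by rw [← Nat.mul_add]; exact c⟩
        · rintro ⟨a, b, c, d⟩
          exact ⟨⟨a, by omega, by rw [Nat.mul_add]; exact d⟩, b, c, rfl⟩
      · rw [if_neg hv, if_neg (fun h => hv h.2.2.2.symm)]
    rw [Finset.sum_congr rfl fun v _ => h2 v, Finset.sum_ite_eq' _ (v1 + v2)]
    by_cases hc : 0 < u1 ∧ 0 < v1 ∧ 0 < v2 ∧ u1 * v1 + u1 * v2 = n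
    · have hmem : v1 + v2 ∈ Finset.range (n+1) := by
        simp only [Finset.mem_range]
        have h1 : v1 ≤ u1 * v1 := Nat.le_mul_of_pos_left v1 hu
        have h2 : v2 ≤ u1 * v2 := Nat.le_mul_of_pos_left v2 hu
        omega
      rw [if_pos hmem]
    · rw [if_neg hc]
      by_cases hm : v1 + v2 ∈ Finset.range (n+1) <;> simp [hm]
  · rw [Finset.sum_eq_zero fun v1 _ => Finset.sum_eq_zero fun v2 _ =>
        if_neg (fun h => hu h.1),
      Finset.sum_eq_zero fun v _ => if_neg (fun h => hu h.1)]

private lemma coeff_g' (k n : ℕ) : (PowerSeries.coeff n) (g k)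
    = ∑ u ∈ n.divisors, ((n / u : ℕ) : ℚ) ^ (k - 1) / (Nat.factorial (k - 1) : ℚ) := by
  simp [g, gb]

private lemma coeff_g2' (k1 k2 n : ℕ) : (PowerSeries.coeff n) (g2 k1 k2)
    = ∑ u1 ∈ Finset.range (n+1), ∑ u2 ∈ Finset.range (n+1),
      ∑ v1 ∈ Finset.range (n+1), ∑ v2 ∈ Finset.range (n+1),
        if 0 < u1 ∧ u1 < u2 ∧ 0 < v1 ∧ 0 < v2 ∧ u1 * v1 + u2 * v2 = n then
          ((v1 : ℚ) ^ (k1 - 1) / (Nat.factorial (k1 - 1) : ℚ)) *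
          ((v2 : ℚ) ^ (k2 - 1) / (Nat.factorial (k2 - 1) : ℚ))
        else 0 := by
  simp [g2, gb2]

end StuffleAux


/-- The quasi-shuffle (stuffle) product `g₂·g₃ = g_{2,3} + g_{3,2} + g₅ − (1/12) g₃`. -/
theorem stmt_2 : g 2 * g 3 = g2 2 3 + g2 3 2 + g 5 - (1/12 : ℚ) • g 3 := by
  ext n
  rw [PowerSeries.coeff_mul, map_sub, map_add, map_add, map_smul, smul_eq_mul]
  -- LHS
  have hL : (∑ p ∈ Finset.HasAntidiagonal.antidiagonal n,
      (PowerSeries.coeff p.1) (g 2) * (PowerSeries.coeff p.2) (g 3))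
      = ∑ u1 ∈ Finset.range (n+1), ∑ u2 ∈ Finset.range (n+1),
        ∑ v1 ∈ Finset.range (n+1), ∑ v2 ∈ Finset.range (n+1),
          if 0 < u1 ∧ 0 < u2 ∧ 0 < v1 ∧ 0 < v2 ∧ u1 * v1 + u2 * v2 = n then
            (v1:ℚ) * ((v2:ℚ)^2/2) else 0 := by
    have := lemP n (fun v => (v:ℚ)) (fun v => (v:ℚ)^2/2)
    rw [← this]
    refine Finset.sum_congr rfl fun p _ => ?_
    rw [coeff_g' 2 p.1, coeff_g' 3 p.2]
    norm_num [Nat.factorial]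
  rw [hL]
  -- split pointwise
  have hsplit : ∀ u1 u2 v1 v2 : ℕ,
      (if 0 < u1 ∧ 0 < u2 ∧ 0 < v1 ∧ 0 < v2 ∧ u1 * v1 + u2 * v2 = n then
        (v1:ℚ) * ((v2:ℚ)^2/2) else 0)
      = (if 0 < u1 ∧ u1 < u2 ∧ 0 < v1 ∧ 0 < v2 ∧ u1 * v1 + u2 * v2 = n then
          (v1:ℚ) * ((v2:ℚ)^2/2) else 0)
      + (if 0 < u2 ∧ u2 < u1 ∧ 0 < v1 ∧ 0 < v2 ∧ u1 * v1 + u2 * v2 = n then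
          (v1:ℚ) * ((v2:ℚ)^2/2) else 0)
      + (if u1 = u2 ∧ 0 < u1 ∧ 0 < v1 ∧ 0 < v2 ∧ u1 * v1 + u2 * v2 = n then
          (v1:ℚ) * ((v2:ℚ)^2/2) else 0) :=
    fun u1 u2 v1 v2 => split3 u1 u2 v1 v2 n _
  simp only [hsplit, Finset.sum_add_distrib]
  -- identify the three pieces
  have h1 : (∑ u1 ∈ Finset.range (n+1), ∑ u2 ∈ Finset.range (n+1),
      ∑ v1 ∈ Finset.range (n+1), ∑ v2 ∈ Finset.range (n+1),
        if 0 < u1 ∧ u1 < u2 ∧ 0 < v1 ∧ 0 < v2 ∧ u1 * v1 + u2 * v2 = n then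
          (v1:ℚ) * ((v2:ℚ)^2/2) else 0)
      = (PowerSeries.coeff n) (g2 2 3) := by
    rw [coeff_g2' 2 3 n]
    refine Finset.sum_congr rfl fun u1 _ => Finset.sum_congr rfl fun u2 _ =>
      Finset.sum_congr rfl fun v1 _ => Finset.sum_congr rfl fun v2 _ => ?_
    norm_num [Nat.factorial]
  have h2 : (∑ u1 ∈ Finset.range (n+1), ∑ u2 ∈ Finset.range (n+1),
      ∑ v1 ∈ Finset.range (n+1), ∑ v2 ∈ Finset.range (n+1),
        if 0 < u2 ∧ u2 < u1 ∧ 0 < v1 ∧ 0 < v2 ∧ u1 * v1 + u2 * v2 = n then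
          (v1:ℚ) * ((v2:ℚ)^2/2) else 0)
      = (PowerSeries.coeff n) (g2 3 2) := by
    rw [swap4 (fun a b c d =>
      if 0 < b ∧ b < a ∧ 0 < c ∧ 0 < d ∧ a * c + b * d = n then
        (c : ℚ) * ((d : ℚ)^2 / 2) else 0), coeff_g2' 3 2 n]
    refine Finset.sum_congr rfl fun u1 _ => Finset.sum_congr rfl fun u2 _ =>
      Finset.sum_congr rfl fun v1 _ => Finset.sum_congr rfl fun v2 _ => ?_
    norm_num [Nat.factorial]
    refine if_congr ?_ (mul_comm _ _) rfl
    constructor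
    · rintro ⟨a, b, c, d, e⟩
      exact ⟨a, b, d, c, (Nat.add_comm (u1 * v1) (u2 * v2)) ▸ e⟩
    · rintro ⟨a, b, c, d, e⟩
      exact ⟨a, b, d, c, (Nat.add_comm (u2 * v2) (u1 * v1)) ▸ e⟩
  have h3 : (∑ u1 ∈ Finset.range (n+1), ∑ u2 ∈ Finset.range (n+1),
      ∑ v1 ∈ Finset.range (n+1), ∑ v2 ∈ Finset.range (n+1),
        if u1 = u2 ∧ 0 < u1 ∧ 0 < v1 ∧ 0 < v2 ∧ u1 * v1 + u2 * v2 = n then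
          (v1:ℚ) * ((v2:ℚ)^2/2) else 0)
      = (PowerSeries.coeff n) (g 5) - 1/12 * (PowerSeries.coeff n) (g 3) := by
    rw [diagD n, coeff_g' 5 n, coeff_g' 3 n, Finset.mul_sum, ← Finset.sum_sub_distrib]
    have hpt : ∀ x ∈ n.divisors,
        (((n / x : ℕ):ℚ) ^ (5 - 1) / (Nat.factorial (5 - 1) : ℚ)
          - 1/12 * (((n / x : ℕ):ℚ) ^ (3 - 1) / (Nat.factorial (3 - 1) : ℚ)))
        = (((n / x : ℕ):ℚ)^4 - ((n / x : ℕ):ℚ)^2)/24 := by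
      intro x _
      norm_num [show Nat.factorial 4 = 24 from rfl, show Nat.factorial 2 = 2 from rfl]
      ring
    rw [Finset.sum_congr rfl hpt,
      divA n n le_rfl (fun u v => ((v:ℚ)^4 - (v:ℚ)^2)/24)]
  rw [h1, h2, h3]
  ring
end

section
/- In ℚ[[q]] one has the identity g^{(1)}_1 · g^{(2)}_1 = g^{(1,2)}_{1,1} + g^{(2,1)}_{1,1} + 3·g^{(3)}_2 − 3·g^{(3)}_1. -/
open Finset PowerSeries

lemma coeff_gb (d k n N : ℕ) (hn : n ≤ N) :
    (PowerSeries.coeff n) (gb d k) =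
    ∑ u ∈ range (N+1), ∑ v ∈ range (N+1),
      if 0 < u ∧ 0 < v ∧ u * v = n then
        ((u : ℚ) ^ d / (Nat.factorial d : ℚ)) * ((v : ℚ) ^ (k-1) / (Nat.factorial (k-1) : ℚ))
      else 0 := by
  rw [gb, PowerSeries.coeff_mk,
    ← Nat.sum_divisorsAntidiagonal
      (fun u v => ((u : ℚ) ^ d / (Nat.factorial d : ℚ)) * ((v : ℚ) ^ (k-1) / (Nat.factorial (k-1) : ℚ))),
    ← Finset.sum_product', ← Finset.sum_filter]
  apply Finset.sum_congr _ (fun _ _ => rfl)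
  ext ⟨u, v⟩
  simp only [Finset.mem_filter, Finset.mem_product, Finset.mem_range, Nat.lt_succ_iff,
    Nat.mem_divisorsAntidiagonal]
  constructor
  · rintro ⟨huv, hn0⟩
    have hn0 : n ≠ 0 := hn0
    have hu : 0 < u := by
      rcases Nat.eq_zero_or_pos u with h|h
      · subst h; rw [zero_mul] at huv; exact absurd huv.symm hn0
      · exact h
    have hv : 0 < v := by
      rcases Nat.eq_zero_or_pos v with h|h
      · subst h; rw [mul_zero] at huv; exact absurd huv.symm hn0
      · exact h
    refine ⟨⟨?_, ?_⟩, hu, hv, huv⟩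
    · calc u ≤ u * v := Nat.le_mul_of_pos_right u hv
        _ = n := huv
        _ ≤ N := hn
    · calc v ≤ u * v := Nat.le_mul_of_pos_left v hu
        _ = n := huv
        _ ≤ N := hn
  · rintro ⟨-, hu, hv, huv⟩
    refine ⟨huv, fun h => ?_⟩
    subst h; exact absurd huv (Nat.mul_ne_zero hu.ne' hv.ne')

lemma collapse (n a b : ℕ) (c : ℚ) :
    (∑ p ∈ Finset.HasAntidiagonal.antidiagonal n, if a = p.1 ∧ b = p.2 then c else 0) = if a + b = n then c else 0 := by
  have h : ∀ p : ℕ × ℕ, (a = p.1 ∧ b = p.2) = ((a, b) = p) := by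
    intro p; simp [Prod.ext_iff]
  simp only [h, Finset.sum_ite_eq, Finset.HasAntidiagonal.mem_antidiagonal]

noncomputable def Q4 (n : ℕ) (f : ℕ → ℕ → ℕ → ℕ → ℚ) : ℚ :=
  ∑ u1 ∈ range (n+1), ∑ u2 ∈ range (n+1), ∑ v1 ∈ range (n+1), ∑ v2 ∈ range (n+1), f u1 u2 v1 v2

lemma Q4_swap (n : ℕ) (f : ℕ → ℕ → ℕ → ℕ → ℚ) :
    Q4 n (fun u1 u2 v1 v2 => f u2 u1 v2 v1) = Q4 n f := by
  unfold Q4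
  rw [Finset.sum_comm]
  exact Finset.sum_congr rfl fun u _ => Finset.sum_congr rfl fun u' _ => Finset.sum_comm

lemma coeff_mul_gb (n : ℕ) :
    (PowerSeries.coeff n) (gb 1 1 * gb 2 1) =
    Q4 n (fun u1 u2 v1 v2 =>
      if 0 < u1 ∧ 0 < u2 ∧ 0 < v1 ∧ 0 < v2 ∧ u1 * v1 + u2 * v2 = n then
        ((u1 : ℚ) ^ 1 / (Nat.factorial 1 : ℚ)) * ((v1 : ℚ) ^ (1-1) / (Nat.factorial (1-1) : ℚ)) *
        (((u2 : ℚ) ^ 2 / (Nat.factorial 2 : ℚ)) * ((v2 : ℚ) ^ (1-1) / (Nat.factorial (1-1) : ℚ)))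
      else 0) := by
  rw [PowerSeries.coeff_mul]
  have step : ∀ p ∈ Finset.HasAntidiagonal.antidiagonal n,
      (PowerSeries.coeff p.1) (gb 1 1) * (PowerSeries.coeff p.2) (gb 2 1) =
      ∑ u1 ∈ range (n+1), ∑ u2 ∈ range (n+1), ∑ v1 ∈ range (n+1), ∑ v2 ∈ range (n+1),
        if (0 < u1 ∧ 0 < v1 ∧ u1 * v1 = p.1) ∧ (0 < u2 ∧ 0 < v2 ∧ u2 * v2 = p.2) then
          ((u1 : ℚ) ^ 1 / (Nat.factorial 1 : ℚ)) * ((v1 : ℚ) ^ (1-1) / (Nat.factorial (1-1) : ℚ)) *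
          (((u2 : ℚ) ^ 2 / (Nat.factorial 2 : ℚ)) * ((v2 : ℚ) ^ (1-1) / (Nat.factorial (1-1) : ℚ)))
        else 0 := by
    intro p hp
    rw [Finset.HasAntidiagonal.mem_antidiagonal] at hp
    rw [coeff_gb 1 1 p.1 n (by omega), coeff_gb 2 1 p.2 n (by omega)]
    rw [Finset.sum_mul_sum]
    refine Finset.sum_congr rfl fun u1 _ => Finset.sum_congr rfl fun u2 _ => ?_
    rw [Finset.sum_mul_sum]
    refine Finset.sum_congr rfl fun v1 _ => Finset.sum_congr rfl fun v2 _ => ?_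
    rw [ite_zero_mul_ite_zero]
  rw [Finset.sum_congr rfl step]
  unfold Q4
  rw [Finset.sum_comm]
  refine Finset.sum_congr rfl fun u1 _ => ?_
  rw [Finset.sum_comm]
  refine Finset.sum_congr rfl fun u2 _ => ?_
  rw [Finset.sum_comm]
  refine Finset.sum_congr rfl fun v1 _ => ?_
  rw [Finset.sum_comm]
  refine Finset.sum_congr rfl fun v2 _ => ?_
  by_cases h : 0 < u1 ∧ 0 < u2 ∧ 0 < v1 ∧ 0 < v2
  · obtain ⟨h1, h2, h3, h4⟩ := h
    have hc : ∀ p : ℕ × ℕ,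
        ((0 < u1 ∧ 0 < v1 ∧ u1 * v1 = p.1) ∧ (0 < u2 ∧ 0 < v2 ∧ u2 * v2 = p.2)) =
        (u1 * v1 = p.1 ∧ u2 * v2 = p.2) := by
      intro p; simp [h1, h2, h3, h4]
    simp only [hc]
    rw [collapse]
    simp [h1, h2, h3, h4]
  · have hc : ∀ p : ℕ × ℕ,
        ¬((0 < u1 ∧ 0 < v1 ∧ u1 * v1 = p.1) ∧ (0 < u2 ∧ 0 < v2 ∧ u2 * v2 = p.2)) := by
      intro p; tauto
    have hc2 : ¬(0 < u1 ∧ 0 < u2 ∧ 0 < v1 ∧ 0 < v2 ∧ u1 * v1 + u2 * v2 = n) := by tauto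
    simp only [hc, hc2, if_false, Finset.sum_const_zero]

lemma split_ite (n u1 u2 v1 v2 : ℕ) (c : ℚ) :
    (if 0 < u1 ∧ 0 < u2 ∧ 0 < v1 ∧ 0 < v2 ∧ u1 * v1 + u2 * v2 = n then c else 0) =
    (if 0 < u1 ∧ u1 < u2 ∧ 0 < v1 ∧ 0 < v2 ∧ u1 * v1 + u2 * v2 = n then c else 0)
    + (if 0 < u2 ∧ u2 < u1 ∧ 0 < v1 ∧ 0 < v2 ∧ u1 * v1 + u2 * v2 = n then c else 0)
    + (if 0 < u1 ∧ u1 = u2 ∧ 0 < v1 ∧ 0 < v2 ∧ u1 * v1 + u2 * v2 = n then c else 0) := by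
  by_cases hE : u1 * v1 + u2 * v2 = n
  · simp only [hE, and_true]
    clear hE
    split_ifs <;> (first | ring1 | (exfalso; omega))
  · simp [hE]

lemma count_lt (n v : ℕ) (hv : v ≤ n) (hv0 : 0 < v) (c : ℚ) :
    (∑ w ∈ range (n+1), if 0 < w ∧ w < v then c else 0) = ((v : ℚ) - 1) * c := by
  rw [← Finset.sum_filter]
  have hf : Finset.filter (fun w => 0 < w ∧ w < v) (range (n+1)) = Finset.Ico 1 v := by
    ext w; simp only [Finset.mem_filter, Finset.mem_range, Finset.mem_Ico]; omega
  rw [hf, Finset.sum_const, Nat.card_Ico, nsmul_eq_mul, Nat.cast_sub hv0]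
  norm_num

lemma inner2 (n u1 : ℕ) (c : ℚ) :
    (∑ v1 ∈ range (n+1), ∑ v2 ∈ range (n+1),
      if 0 < u1 ∧ 0 < v1 ∧ 0 < v2 ∧ u1 * v1 + u1 * v2 = n then c else 0)
    = ∑ v ∈ range (n+1), if 0 < u1 ∧ 0 < v ∧ u1 * v = n then c * ((v : ℚ) - 1) else 0 := by
  by_cases hu : 0 < u1
  swap
  · simp [hu]
  have hrhs : ∀ v ∈ range (n+1),
      (if 0 < u1 ∧ 0 < v ∧ u1 * v = n then c * ((v : ℚ) - 1) else 0)
      = ∑ w ∈ range (n+1), if (0 < v ∧ u1 * v = n) ∧ 0 < w ∧ w < v then c else 0 := by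
    intro v _
    by_cases h : 0 < v ∧ u1 * v = n
    · have hvn : v ≤ n := by
        calc v ≤ u1 * v := Nat.le_mul_of_pos_left v hu
          _ = n := h.2
      simp only [h, hu, true_and, and_true, if_true]
      rw [count_lt n v hvn h.1 c]
      ring
    · have h2 : ¬(0 < u1 ∧ 0 < v ∧ u1 * v = n) := by tauto
      have h3 : ∀ w : ℕ, ¬((0 < v ∧ u1 * v = n) ∧ 0 < w ∧ w < v) := by tauto
      simp only [h2, h3, if_false, Finset.sum_const_zero]
  rw [Finset.sum_congr rfl hrhs, ← Finset.sum_product', ← Finset.sum_filter,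
    ← Finset.sum_product', ← Finset.sum_filter, Finset.sum_const, Finset.sum_const]
  congr 1
  refine Finset.card_bij' (fun p _ => (p.1 + p.2, p.1)) (fun p _ => (p.2, p.1 - p.2)) ?_ ?_ ?_ ?_
  · rintro ⟨v1, v2⟩ ha
    simp only [Finset.mem_filter, Finset.mem_product, Finset.mem_range] at ha ⊢
    obtain ⟨⟨hm1, hm2⟩, -, h1, h2, h3⟩ := ha
    have he : u1 * (v1 + v2) = n := by rw [Nat.mul_add]; exact h3
    have hle : v1 + v2 ≤ n := by
      calc v1 + v2 ≤ u1 * (v1 + v2) := Nat.le_mul_of_pos_left _ hu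
        _ = n := he
    exact ⟨⟨by omega, by omega⟩, ⟨by omega, he⟩, by omega, by omega⟩
  · rintro ⟨v, w⟩ ha
    simp only [Finset.mem_filter, Finset.mem_product, Finset.mem_range] at ha ⊢
    obtain ⟨⟨hm1, hm2⟩, ⟨h1, h2⟩, h3, h4⟩ := ha
    refine ⟨⟨by omega, by omega⟩, hu, by omega, by omega, ?_⟩
    rw [← Nat.mul_add]
    have hw : w + (v - w) = v := by omega
    rw [hw]; exact h2
  · rintro ⟨v1, v2⟩ ha
    dsimp only
    simp only [Prod.mk.injEq, true_and, and_true]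
    omega
  · rintro ⟨v, w⟩ ha
    simp only [Finset.mem_filter, Finset.mem_product, Finset.mem_range] at ha
    obtain ⟨-, ⟨h1, h2⟩, h3, h4⟩ := ha
    dsimp only
    simp only [Prod.mk.injEq, true_and, and_true]
    omega

lemma Q4_congr {n : ℕ} {f g : ℕ → ℕ → ℕ → ℕ → ℚ}
    (h : ∀ u1 u2 v1 v2, f u1 u2 v1 v2 = g u1 u2 v1 v2) : Q4 n f = Q4 n g := by
  unfold Q4
  exact Finset.sum_congr rfl fun u1 _ => Finset.sum_congr rfl fun u2 _ =>
    Finset.sum_congr rfl fun v1 _ => Finset.sum_congr rfl fun v2 _ => h u1 u2 v1 v2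

lemma Q4_add {n : ℕ} (f g : ℕ → ℕ → ℕ → ℕ → ℚ) :
    Q4 n (fun u1 u2 v1 v2 => f u1 u2 v1 v2 + g u1 u2 v1 v2) = Q4 n f + Q4 n g := by
  unfold Q4
  simp only [Finset.sum_add_distrib]

lemma diag (n : ℕ) :
    Q4 n (fun u1 u2 v1 v2 =>
      if 0 < u1 ∧ u1 = u2 ∧ 0 < v1 ∧ 0 < v2 ∧ u1 * v1 + u2 * v2 = n then
        (u1 : ℚ) * (u2 : ℚ) ^ 2 / 2 else 0)
    = 3 * (PowerSeries.coeff n) (gb 3 2) - 3 * (PowerSeries.coeff n) (gb 3 1) := by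
  have lhs1 : Q4 n (fun u1 u2 v1 v2 =>
      if 0 < u1 ∧ u1 = u2 ∧ 0 < v1 ∧ 0 < v2 ∧ u1 * v1 + u2 * v2 = n then
        (u1 : ℚ) * (u2 : ℚ) ^ 2 / 2 else 0)
      = ∑ u1 ∈ range (n+1), ∑ v ∈ range (n+1),
          if 0 < u1 ∧ 0 < v ∧ u1 * v = n then ((u1 : ℚ) ^ 3 / 2) * ((v : ℚ) - 1) else 0 := by
    unfold Q4
    refine Finset.sum_congr rfl fun u1 hu1 => ?_
    rw [Finset.sum_comm]
    have step : ∀ v1 ∈ range (n+1), (∑ u2 ∈ range (n+1), ∑ v2 ∈ range (n+1),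
        if 0 < u1 ∧ u1 = u2 ∧ 0 < v1 ∧ 0 < v2 ∧ u1 * v1 + u2 * v2 = n then
          (u1 : ℚ) * (u2 : ℚ) ^ 2 / 2 else 0)
        = ∑ v2 ∈ range (n+1),
          if 0 < u1 ∧ 0 < v1 ∧ 0 < v2 ∧ u1 * v1 + u1 * v2 = n then (u1 : ℚ) ^ 3 / 2 else 0 := by
      intro v1 _
      rw [Finset.sum_comm]
      refine Finset.sum_congr rfl fun v2 _ => ?_
      have hpt : ∀ u2, (if 0 < u1 ∧ u1 = u2 ∧ 0 < v1 ∧ 0 < v2 ∧ u1 * v1 + u2 * v2 = n then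
            (u1 : ℚ) * (u2 : ℚ) ^ 2 / 2 else 0)
          = if u1 = u2 then
              (if 0 < u1 ∧ 0 < v1 ∧ 0 < v2 ∧ u1 * v1 + u2 * v2 = n then (u1 : ℚ) ^ 3 / 2 else 0)
            else 0 := by
        intro u2
        by_cases hq : u1 = u2
        · subst hq
          rw [if_pos rfl]
          exact if_congr (by tauto) (by ring) rfl
        · rw [if_neg hq, if_neg]
          rintro ⟨-, h, -⟩; exact hq h
      rw [Finset.sum_congr rfl fun u2 _ => hpt u2, Finset.sum_ite_eq, if_pos hu1]
    rw [Finset.sum_congr rfl step]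
    exact inner2 n u1 ((u1 : ℚ) ^ 3 / 2)
  rw [lhs1, coeff_gb 3 2 n n le_rfl, coeff_gb 3 1 n n le_rfl, Finset.mul_sum, Finset.mul_sum,
    ← Finset.sum_sub_distrib]
  refine Finset.sum_congr rfl fun u _ => ?_
  rw [Finset.mul_sum, Finset.mul_sum, ← Finset.sum_sub_distrib]
  refine Finset.sum_congr rfl fun v _ => ?_
  split_ifs with h
  · norm_num [Nat.factorial]
    ring
  · simp

lemma coeff_gb2 (d1 d2 n : ℕ) :
    (PowerSeries.coeff n) (gb2 d1 d2 1 1) = Q4 n (fun u1 u2 v1 v2 =>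
      if 0 < u1 ∧ u1 < u2 ∧ 0 < v1 ∧ 0 < v2 ∧ u1 * v1 + u2 * v2 = n then
        ((u1 : ℚ) ^ d1 / (Nat.factorial d1 : ℚ)) *
        ((u2 : ℚ) ^ d2 / (Nat.factorial d2 : ℚ)) *
        ((v1 : ℚ) ^ (1 - 1) / (Nat.factorial (1 - 1) : ℚ)) *
        ((v2 : ℚ) ^ (1 - 1) / (Nat.factorial (1 - 1) : ℚ))
      else 0) := by
  rw [gb2, PowerSeries.coeff_mk]
  rfl


/-- `g^{(1)}_1 · g^{(2)}_1 = g^{(1,2)}_{1,1} + g^{(2,1)}_{1,1} + 3 g^{(3)}_2 − 3 g^{(3)}_1`. -/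
theorem stmt_3 :
    gb 1 1 * gb 2 1 =
      gb2 1 2 1 1 + gb2 2 1 1 1 + (3 : ℚ) • gb 3 2 - (3 : ℚ) • gb 3 1 := by
  refine PowerSeries.ext fun n => ?_
  rw [map_sub, map_add, map_add, map_smul, map_smul, smul_eq_mul, smul_eq_mul]
  rw [coeff_mul_gb n]
  have hW : Q4 n (fun u1 u2 v1 v2 =>
      if 0 < u1 ∧ 0 < u2 ∧ 0 < v1 ∧ 0 < v2 ∧ u1 * v1 + u2 * v2 = n then
        ((u1 : ℚ) ^ 1 / (Nat.factorial 1 : ℚ)) * ((v1 : ℚ) ^ (1-1) / (Nat.factorial (1-1) : ℚ)) *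
        (((u2 : ℚ) ^ 2 / (Nat.factorial 2 : ℚ)) * ((v2 : ℚ) ^ (1-1) / (Nat.factorial (1-1) : ℚ)))
      else 0)
      = Q4 n (fun u1 u2 v1 v2 =>
      if 0 < u1 ∧ 0 < u2 ∧ 0 < v1 ∧ 0 < v2 ∧ u1 * v1 + u2 * v2 = n then
        (u1 : ℚ) * (u2 : ℚ) ^ 2 / 2 else 0) :=
    Q4_congr fun u1 u2 v1 v2 =>
      if_congr Iff.rfl (by norm_num [Nat.factorial]; ring) rfl
  rw [hW]
  have hsplit : Q4 n (fun u1 u2 v1 v2 =>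
      if 0 < u1 ∧ 0 < u2 ∧ 0 < v1 ∧ 0 < v2 ∧ u1 * v1 + u2 * v2 = n then
        (u1 : ℚ) * (u2 : ℚ) ^ 2 / 2 else 0)
      = Q4 n (fun u1 u2 v1 v2 =>
          if 0 < u1 ∧ u1 < u2 ∧ 0 < v1 ∧ 0 < v2 ∧ u1 * v1 + u2 * v2 = n then
            (u1 : ℚ) * (u2 : ℚ) ^ 2 / 2 else 0)
        + Q4 n (fun u1 u2 v1 v2 =>
          if 0 < u2 ∧ u2 < u1 ∧ 0 < v1 ∧ 0 < v2 ∧ u1 * v1 + u2 * v2 = n then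
            (u1 : ℚ) * (u2 : ℚ) ^ 2 / 2 else 0)
        + Q4 n (fun u1 u2 v1 v2 =>
          if 0 < u1 ∧ u1 = u2 ∧ 0 < v1 ∧ 0 < v2 ∧ u1 * v1 + u2 * v2 = n then
            (u1 : ℚ) * (u2 : ℚ) ^ 2 / 2 else 0) := by
    rw [← Q4_add, ← Q4_add]
    exact Q4_congr fun u1 u2 v1 v2 => split_ite n u1 u2 v1 v2 _
  rw [hsplit]
  have hlt : Q4 n (fun u1 u2 v1 v2 =>
      if 0 < u1 ∧ u1 < u2 ∧ 0 < v1 ∧ 0 < v2 ∧ u1 * v1 + u2 * v2 = n then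
        (u1 : ℚ) * (u2 : ℚ) ^ 2 / 2 else 0) = (PowerSeries.coeff n) (gb2 1 2 1 1) := by
    rw [coeff_gb2]
    exact Q4_congr fun u1 u2 v1 v2 =>
      if_congr Iff.rfl (by norm_num [Nat.factorial]; ring) rfl
  have hgt : Q4 n (fun u1 u2 v1 v2 =>
      if 0 < u2 ∧ u2 < u1 ∧ 0 < v1 ∧ 0 < v2 ∧ u1 * v1 + u2 * v2 = n then
        (u1 : ℚ) * (u2 : ℚ) ^ 2 / 2 else 0) = (PowerSeries.coeff n) (gb2 2 1 1 1) := by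
    rw [coeff_gb2]
    rw [← Q4_swap n (fun u1 u2 v1 v2 =>
      if 0 < u1 ∧ u1 < u2 ∧ 0 < v1 ∧ 0 < v2 ∧ u1 * v1 + u2 * v2 = n then
        ((u1 : ℚ) ^ 2 / (Nat.factorial 2 : ℚ)) *
        ((u2 : ℚ) ^ 1 / (Nat.factorial 1 : ℚ)) *
        ((v1 : ℚ) ^ (1 - 1) / (Nat.factorial (1 - 1) : ℚ)) *
        ((v2 : ℚ) ^ (1 - 1) / (Nat.factorial (1 - 1) : ℚ))
      else 0)]
    refine Q4_congr fun u1 u2 v1 v2 => if_congr ?_ (by norm_num [Nat.factorial]; ring) rfl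
    constructor
    · rintro ⟨a, b, c, d, e⟩; exact ⟨a, b, d, c, by rw [add_comm]; exact e⟩
    · rintro ⟨a, b, c, d, e⟩; exact ⟨a, b, d, c, by rw [add_comm]; exact e⟩
  rw [hlt, hgt, diag n]
  ring
end

section
/- For all k_1, k_2 ≥ 1, the product of divisor-sum series satisfies the harmonic (stuffle) product formula g_{k_1} · g_{k_2} = g_{k_1,k_2} + g_{k_2,k_1} + g_{k_1+k_2} + Σ_{j=1}^{k_1} λ^j_{k_1,k_2}·g_j + Σ_{j=1}^{k_2} λ^j_{k_2,k_1}·g_j, where λ^j_{a,b} = (−1)^{b−1}·C(a+b−j−1, a−j)·B_{a+b−j}/(a+b−j)! with B_m the m-th Bernoulli number. -/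
open Finset PowerSeries

/-- The coefficients `λ^j_{a,b} = (−1)^{b−1} C(a+b−j−1, a−j) B_{a+b−j}/(a+b−j)!`
(Bernoulli numbers with `B₁ = −1/2`). -/
noncomputable def lam (j a b : ℕ) : ℚ :=
  (-1 : ℚ) ^ (b - 1) * (Nat.choose (a + b - j - 1) (a - j) : ℚ) *
    bernoulli (a + b - j) / (Nat.factorial (a + b - j) : ℚ)


theorem vdm (a b c : ℕ) :
    ∑ j ∈ range (b+1), (-1:ℚ)^j * (b.choose j) * ((a+j).choose c) =
      if b ≤ c then (-1:ℚ)^b * (a.choose (c - b)) else 0 := by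
  induction b generalizing a with
  | zero => simp
  | succ b ih =>
    have step : ∑ j ∈ range (b+2), (-1:ℚ)^j * ((b+1).choose j) * ((a+j).choose c)
        = (∑ j ∈ range (b+1), (-1:ℚ)^j * (b.choose j) * ((a+j).choose c))
          - ∑ j ∈ range (b+1), (-1:ℚ)^j * (b.choose j) * (((a+1)+j).choose c) := by
      rw [Finset.sum_range_succ' (fun j => (-1:ℚ)^j * ((b+1).choose j) * ((a+j).choose c))]
      have hsummand : ∀ j, (-1:ℚ)^(j+1) * ((b+1).choose (j+1)) * ((a+(j+1)).choose c)
          = (-1:ℚ)^(j+1) * (b.choose (j+1)) * ((a+(j+1)).choose c)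
            - (-1:ℚ)^j * (b.choose j) * (((a+1)+j).choose c) := by
        intro j
        have : ((b+1).choose (j+1) : ℚ) = (b.choose j : ℚ) + (b.choose (j+1) : ℚ) := by
          rw [Nat.choose_succ_succ]; push_cast; ring
        rw [this]
        have : (a+(j+1)) = (a+1)+j := by ring
        rw [this]; ring
      rw [Finset.sum_congr rfl (fun j _ => hsummand j), Finset.sum_sub_distrib]
      have peel : ∑ j ∈ range (b+1), (-1:ℚ)^(j+1) * (b.choose (j+1)) * ((a+(j+1)).choose c)
          = (∑ j ∈ range (b+2), (-1:ℚ)^j * (b.choose j) * ((a+j).choose c))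
            - (a.choose c : ℚ) := by
        rw [Finset.sum_range_succ' (fun j => (-1:ℚ)^j * (b.choose j) * ((a+j).choose c))]
        simp
      rw [peel, Finset.sum_range_succ (fun j => (-1:ℚ)^j * (b.choose j) * ((a+j).choose c))]
      have : (b.choose (b+1) : ℚ) = 0 := by
        simp [Nat.choose_eq_zero_of_lt]
      simp only [this]
      simp
      ring
    rw [step, ih, ih]
    by_cases h : b + 1 ≤ c
    · have hb : b ≤ c := by omega
      rw [if_pos hb, if_pos hb, if_pos h]
      have hp : (a+1).choose (c-b) = a.choose (c-b-1) + a.choose (c-b) := by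
        have : c - b = (c - b - 1) + 1 := by omega
        rw [this, Nat.choose_succ_succ]
        simp
      have : c - b - 1 = c - (b+1) := by omega
      rw [hp, ← this]
      push_cast; ring
    · by_cases hb : b ≤ c
      · have hbc : b = c := by omega
        rw [if_pos hb, if_pos hb, if_neg h]
        subst hbc
        simp
      · rw [if_neg hb, if_neg hb, if_neg h]; ring

theorem beta_id (a b : ℕ) :
    ∑ j ∈ range (b+1), (-1:ℚ)^j * (b.choose j) / ((a:ℚ)+j+1)
      = (a.factorial : ℚ) * b.factorial / ((a+b+1).factorial : ℚ) := by
  induction b generalizing a with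
  | zero =>
    have ha : (a.factorial : ℚ) ≠ 0 := by exact_mod_cast Nat.factorial_ne_zero _
    have ha2 : ((a:ℚ)+1) ≠ 0 := by positivity
    simp [Nat.factorial_succ]
    field_simp
  | succ b ih =>
    have step : ∑ j ∈ range (b+2), (-1:ℚ)^j * ((b+1).choose j) / ((a:ℚ)+j+1)
        = (∑ j ∈ range (b+1), (-1:ℚ)^j * (b.choose j) / ((a:ℚ)+j+1))
          - ∑ j ∈ range (b+1), (-1:ℚ)^j * (b.choose j) / ((a:ℚ)+1+j+1) := by
      rw [Finset.sum_range_succ' (fun j => (-1:ℚ)^j * ((b+1).choose j) / ((a:ℚ)+j+1))]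
      have hsummand : ∀ j, (-1:ℚ)^(j+1) * ((b+1).choose (j+1)) / ((a:ℚ)+((j:ℕ)+1:ℕ)+1)
          = (-1:ℚ)^(j+1) * (b.choose (j+1)) / ((a:ℚ)+((j:ℕ)+1:ℕ)+1)
            - (-1:ℚ)^j * (b.choose j) / ((a:ℚ)+1+j+1) := by
        intro j
        have h1 : ((b+1).choose (j+1) : ℚ) = (b.choose j : ℚ) + (b.choose (j+1) : ℚ) := by
          rw [Nat.choose_succ_succ]; push_cast; ring
        have hd : ((a:ℚ)+((j:ℕ)+1:ℕ)+1) ≠ 0 := by push_cast; positivity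
        have hd2 : ((a:ℚ)+1+j+1) ≠ 0 := by positivity
        rw [h1]
        field_simp
        push_cast
        ring
      rw [Finset.sum_congr rfl (fun j _ => hsummand j), Finset.sum_sub_distrib]
      have peel : ∑ j ∈ range (b+1), (-1:ℚ)^(j+1) * (b.choose (j+1)) / ((a:ℚ)+((j:ℕ)+1:ℕ)+1)
          = (∑ j ∈ range (b+2), (-1:ℚ)^j * (b.choose j) / ((a:ℚ)+j+1))
            - 1 / ((a:ℚ)+1) := by
        rw [Finset.sum_range_succ' (fun j => (-1:ℚ)^j * (b.choose j) / ((a:ℚ)+j+1))]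
        simp
      rw [peel, Finset.sum_range_succ (fun j => (-1:ℚ)^j * (b.choose j) / ((a:ℚ)+j+1))]
      have : (b.choose (b+1) : ℚ) = 0 := by simp [Nat.choose_eq_zero_of_lt]
      simp only [this]
      simp
      ring
    rw [step, ih]
    have e1 : ∑ j ∈ range (b+1), (-1:ℚ)^j * (b.choose j) / ((a:ℚ)+1+j+1)
        = ∑ j ∈ range (b+1), (-1:ℚ)^j * (b.choose j) / (((a+1:ℕ):ℚ)+j+1) := by
      apply Finset.sum_congr rfl; intro j _; push_cast; ring_nf
    rw [e1, ih]
    have h1 : ((a+1)+b+1) = (a+b+1)+1 := by ring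
    have h2 : (a+(b+1)+1) = (a+b+1)+1 := by ring
    rw [h1, h2, Nat.factorial_succ ((a+b+1)), Nat.factorial_succ a, Nat.factorial_succ b]
    have hfe : ((a+b+1).factorial : ℚ) ≠ 0 := by exact_mod_cast Nat.factorial_ne_zero _
    have hfa : (a.factorial : ℚ) ≠ 0 := by exact_mod_cast Nat.factorial_ne_zero _
    have hfb : (b.factorial : ℚ) ≠ 0 := by exact_mod_cast Nat.factorial_ne_zero _
    field_simp
    push_cast
    ring

theorem sub_pow' (x y : ℚ) (n : ℕ) :
    (x - y)^n = ∑ j ∈ range (n+1), (-1:ℚ)^j * (n.choose j) * y^j * x^(n-j) := by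
  rw [sub_pow, ← Finset.sum_range_reflect]
  apply Finset.sum_congr rfl
  intro j hj
  rw [Finset.mem_range] at hj
  have h1 : n + 1 - 1 - j = n - j := by omega
  have h2 : n - (n - j) = j := by omega
  have h3 : n.choose (n - j) = n.choose j := Nat.choose_symm (by omega)
  rw [h1, h2, h3]
  have h4 : (-1:ℚ)^(n-j+n) = (-1:ℚ)^j := by
    have : n - j + n = j + 2*(n-j) := by omega
    rw [this, pow_add, pow_mul]
    norm_num
  rw [h4]; ring

theorem ioo_pow (v p : ℕ) (hv : 1 ≤ v) :
    ∑ m ∈ Ioo 0 v, (m:ℚ)^p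
      = (∑ i ∈ range (p+1), bernoulli i * ((p+1).choose i) * (v:ℚ)^(p+1-i)/(p+1))
        - (if p = 0 then 1 else 0) := by
  have h1 : ∑ m ∈ range v, (m:ℚ)^p
      = ∑ i ∈ range (p+1), bernoulli i * ((p+1).choose i) * (v:ℚ)^(p+1-i)/(p+1) :=
    sum_range_pow v p
  have hr : range v = insert 0 (Ioo 0 v) := by
    ext x; simp [Finset.mem_Ioo]; omega
  rw [hr, Finset.sum_insert (by simp)] at h1
  rw [← h1, Nat.cast_zero, zero_pow_eq]
  split_ifs <;> ring

noncomputable def cj (a b i : ℕ) : ℚ :=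
  ∑ j ∈ range (b+1), if i ≤ a + j
    then (-1:ℚ)^j * (b.choose j) * (((a+j+1).choose i) : ℚ) / ((a:ℚ)+j+1) else 0

theorem cj_zero (a b : ℕ) :
    cj a b 0 = (a.factorial : ℚ) * b.factorial / ((a+b+1).factorial : ℚ) := by
  unfold cj
  rw [← beta_id a b]
  apply Finset.sum_congr rfl
  intro j _
  rw [if_pos (Nat.zero_le _)]
  simp

theorem cj_pos (a b i : ℕ) (hi : 1 ≤ i) :
    cj a b i = ((if b+1 ≤ i then (-1:ℚ)^b * (a.choose (i-1-b)) else 0)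
      + (if a+1 ≤ i then (-1:ℚ)^(i-a) * (b.choose (i-1-a)) else 0))/(i:ℚ) := by
  have hi0 : (i:ℚ) ≠ 0 := Nat.cast_ne_zero.mpr (by omega)
  have hFH : ∀ j, (if i ≤ a + j
        then (-1:ℚ)^j * (b.choose j) * (((a+j+1).choose i) : ℚ) / ((a:ℚ)+j+1) else 0)
      = (-1:ℚ)^j * (b.choose j) * (((a+j).choose (i-1)) : ℚ) / (i:ℚ)
        - (if a+j+1 = i then (-1:ℚ)^j * (b.choose j) * (((a+j).choose (i-1)) : ℚ) / (i:ℚ) else 0) := by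
    intro j
    by_cases hc : i ≤ a + j
    · rw [if_pos hc, if_neg (by omega)]
      have hnat : (a+j+1) * ((a+j).choose (i-1)) = ((a+j+1).choose i) * i := by
        have h := Nat.add_one_mul_choose_eq (a+j) (i-1)
        have hii : i - 1 + 1 = i := by omega
        rwa [hii] at h
      have hkey : ((a:ℚ)+j+1) * ((a+j).choose (i-1)) = (i:ℚ) * ((a+j+1).choose i) := by
        calc ((a:ℚ)+j+1) * ((a+j).choose (i-1))
            = (((a+j+1) * ((a+j).choose (i-1)) : ℕ) : ℚ) := by push_cast; ring
          _ = ((((a+j+1).choose i) * i : ℕ) : ℚ) := by rw [hnat]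
          _ = (i:ℚ) * ((a+j+1).choose i) := by push_cast; ring
      have hd : ((a:ℚ)+j+1) ≠ 0 := by positivity
      rw [sub_zero, div_eq_div_iff hd hi0]
      linear_combination (-((-1:ℚ)^j * (b.choose j))) * hkey
    · rw [if_neg hc]
      by_cases he : a+j+1 = i
      · rw [if_pos he]; ring
      · rw [if_neg he]
        have : (a+j) < i - 1 := by omega
        rw [Nat.choose_eq_zero_of_lt this]
        simp
  unfold cj
  rw [Finset.sum_congr rfl (fun j _ => hFH j), Finset.sum_sub_distrib]
  have hF : ∑ j ∈ range (b+1), (-1:ℚ)^j * (b.choose j) * (((a+j).choose (i-1)) : ℚ) / (i:ℚ)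
      = (if b+1 ≤ i then (-1:ℚ)^b * (a.choose (i-1-b)) else 0)/(i:ℚ) := by
    rw [← Finset.sum_div]
    rw [vdm a b (i-1)]
    congr 1
    by_cases hb : b + 1 ≤ i
    · rw [if_pos (by omega : b ≤ i - 1), if_pos hb]
    · rw [if_neg (by omega), if_neg hb]
  have hH : ∑ j ∈ range (b+1), (if a+j+1 = i then (-1:ℚ)^j * (b.choose j) * (((a+j).choose (i-1)) : ℚ) / (i:ℚ) else 0)
      = - (if a+1 ≤ i then (-1:ℚ)^(i-a) * (b.choose (i-1-a)) else 0)/(i:ℚ) := by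
    by_cases hai : a+1 ≤ i ∧ i-a-1 ≤ b
    · rw [Finset.sum_eq_single_of_mem (i-a-1) (Finset.mem_range.mpr (by omega))
        (fun j _ hj => by rw [if_neg (by omega)])]
      rw [if_pos (by omega)]
      have h1 : a + (i-a-1) = i - 1 := by omega
      rw [h1, Nat.choose_self, if_pos hai.1]
      have h2 : i - a = (i - a - 1) + 1 := by omega
      have h3 : i - 1 - a = i - a - 1 := by omega
      rw [h2, h3, pow_succ]
      push_cast
      ring
    · rw [Finset.sum_eq_zero (fun j hj => by
        rw [Finset.mem_range] at hj
        rw [if_neg (by omega)])]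
      by_cases h4 : a + 1 ≤ i
      · have h5 : b < i - 1 - a := by omega
        rw [if_pos h4, Nat.choose_eq_zero_of_lt h5]
        simp
      · rw [if_neg h4]; simp
  rw [hF, hH]
  ring

theorem lhs_eq (a b v : ℕ) (hv : 1 ≤ v) :
    ∑ m ∈ Ioo 0 v, (m:ℚ)^a * ((v:ℚ)-(m:ℚ))^b
      = (∑ i ∈ range (a+b+2), bernoulli i * cj a b i * (v:ℚ)^(a+b+1-i))
        - (if a = 0 then (v:ℚ)^b else 0) := by
  have step1 : ∀ m : ℕ, (m:ℚ)^a * ((v:ℚ)-(m:ℚ))^b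
      = ∑ j ∈ range (b+1), (-1:ℚ)^j * (b.choose j) * (v:ℚ)^(b-j) * (m:ℚ)^(a+j) := by
    intro m
    rw [sub_pow', Finset.mul_sum]
    apply Finset.sum_congr rfl
    intro j _
    rw [pow_add]
    ring
  rw [Finset.sum_congr rfl (fun m _ => step1 m), Finset.sum_comm]
  have step2 : ∀ j ∈ range (b+1),
      ∑ m ∈ Ioo 0 v, (-1:ℚ)^j * (b.choose j) * (v:ℚ)^(b-j) * (m:ℚ)^(a+j)
      = ((-1:ℚ)^j * (b.choose j) * (v:ℚ)^(b-j) *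
          (∑ i ∈ range (a+j+1), bernoulli i * (((a+j+1).choose i) : ℚ) * (v:ℚ)^(a+j+1-i)/((a:ℚ)+(j:ℚ)+1)))
        - ((-1:ℚ)^j * (b.choose j) * (v:ℚ)^(b-j) * (if a+j = 0 then 1 else 0)) := by
    intro j _
    rw [← Finset.mul_sum, ioo_pow v (a+j) hv]
    push_cast
    ring
  rw [Finset.sum_congr rfl step2, Finset.sum_sub_distrib]
  have stepE : ∑ j ∈ range (b+1),
      ((-1:ℚ)^j * (b.choose j) * (v:ℚ)^(b-j) * (if a+j = 0 then 1 else 0))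
      = (if a = 0 then (v:ℚ)^b else 0) := by
    by_cases ha : a = 0
    · subst ha
      rw [if_pos rfl]
      rw [Finset.sum_eq_single_of_mem 0 (Finset.mem_range.mpr (by omega))
        (fun j _ hj => by rw [if_neg (by omega)]; ring)]
      simp
    · rw [if_neg ha]
      apply Finset.sum_eq_zero
      intro j _
      rw [if_neg (by omega)]
      ring
  have stepT : ∑ j ∈ range (b+1),
      ((-1:ℚ)^j * (b.choose j) * (v:ℚ)^(b-j) *
          (∑ i ∈ range (a+j+1), bernoulli i * (((a+j+1).choose i) : ℚ) * (v:ℚ)^(a+j+1-i)/((a:ℚ)+(j:ℚ)+1)))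
      = ∑ i ∈ range (a+b+2), bernoulli i * cj a b i * (v:ℚ)^(a+b+1-i) := by
    have inner : ∀ j ∈ range (b+1),
        ((-1:ℚ)^j * (b.choose j) * (v:ℚ)^(b-j) *
          (∑ i ∈ range (a+j+1), bernoulli i * (((a+j+1).choose i) : ℚ) * (v:ℚ)^(a+j+1-i)/((a:ℚ)+(j:ℚ)+1)))
        = ∑ i ∈ range (a+b+2),
            (if i ≤ a+j then (-1:ℚ)^j * (b.choose j) * (((a+j+1).choose i):ℚ) / ((a:ℚ)+(j:ℚ)+1) else 0)
              * (bernoulli i * (v:ℚ)^(a+b+1-i)) := by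
      intro j hj
      rw [Finset.mem_range] at hj
      have hfil : Finset.filter (fun i => i ≤ a + j) (range (a+b+2)) = range (a+j+1) := by
        ext x; simp; omega
      rw [Finset.mul_sum]
      have e1 : ∀ i ∈ range (a+j+1),
          (-1:ℚ)^j * (b.choose j) * (v:ℚ)^(b-j) *
            (bernoulli i * (((a+j+1).choose i) : ℚ) * (v:ℚ)^(a+j+1-i)/((a:ℚ)+(j:ℚ)+1))
          = ((-1:ℚ)^j * (b.choose j) * (((a+j+1).choose i):ℚ) / ((a:ℚ)+(j:ℚ)+1))
              * (bernoulli i * (v:ℚ)^(a+b+1-i)) := by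
        intro i hi
        rw [Finset.mem_range] at hi
        have hp : (v:ℚ)^(b-j) * (v:ℚ)^(a+j+1-i) = (v:ℚ)^(a+b+1-i) := by
          rw [← pow_add]
          congr 1
          omega
        calc (-1:ℚ)^j * (b.choose j) * (v:ℚ)^(b-j) *
            (bernoulli i * (((a+j+1).choose i) : ℚ) * (v:ℚ)^(a+j+1-i)/((a:ℚ)+(j:ℚ)+1))
            = ((-1:ℚ)^j * (b.choose j) * (((a+j+1).choose i):ℚ) / ((a:ℚ)+(j:ℚ)+1))
              * (bernoulli i * ((v:ℚ)^(b-j) * (v:ℚ)^(a+j+1-i))) := by ring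
          _ = _ := by rw [hp]
      rw [Finset.sum_congr rfl e1, ← hfil, Finset.sum_filter]
      apply Finset.sum_congr rfl
      intro i _
      split_ifs <;> simp
    rw [Finset.sum_congr rfl inner, Finset.sum_comm]
    apply Finset.sum_congr rfl
    intro i _
    unfold cj
    rw [← Finset.sum_mul]
    push_cast
    ring
  rw [stepE, stepT]

theorem icc_reflect (A B : ℕ) (f : ℕ → ℚ) :
    ∑ j ∈ Icc 1 (A+1), f j
      = ∑ i ∈ range (A+B+2), if B+1 ≤ i then f (A+B+2-i) else 0 := by
  rw [← Finset.sum_filter]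
  have hfil : Finset.filter (fun i => B+1 ≤ i) (range (A+B+2)) = Icc (B+1) (A+B+1) := by
    ext x; simp; omega
  rw [hfil]
  apply Finset.sum_nbij' (i := fun j => A+B+2-j) (j := fun j => A+B+2-j)
  · intro x hx; simp at hx ⊢; omega
  · intro x hx; simp at hx ⊢; omega
  · intro x hx; simp at hx ⊢; omega
  · intro x hx; simp at hx ⊢; omega
  · intro x hx; simp at hx; congr 1; omega

theorem lam_eval (a b i : ℕ) (h1 : b+1 ≤ i) (h2 : i ≤ a+b+1) :
    lam (a+b+2-i) (a+1) (b+1)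
      = (-1:ℚ)^b * (((i-1).choose (i-1-b)):ℚ) * bernoulli i / (i.factorial : ℚ) := by
  unfold lam
  rw [show (a+1)+(b+1) - (a+b+2-i) - 1 = i-1 from by omega,
      show (a+1) - (a+b+2-i) = i-1-b from by omega,
      show (a+1)+(b+1) - (a+b+2-i) = i from by omega,
      show (b+1) - 1 = b from by omega]

theorem fact_id (a b i : ℕ) (h1 : b+1 ≤ i) (h2 : i ≤ a+b+1) :
    ((a.choose (i-1-b)) : ℚ) / ((i:ℚ) * (a.factorial:ℚ) * (b.factorial:ℚ))
      = (((i-1).choose (i-1-b)) : ℚ) / ((i.factorial:ℚ) * ((a+b+1-i).factorial:ℚ)) := by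
  rw [Nat.cast_choose ℚ (show i-1-b ≤ a by omega),
      Nat.cast_choose ℚ (show i-1-b ≤ i-1 by omega),
      show a - (i-1-b) = a+b+1-i from by omega,
      show i-1 - (i-1-b) = b from by omega]
  have hif : i.factorial = i * (i-1).factorial := by
    conv_lhs => rw [show i = (i-1)+1 from by omega]
    rw [Nat.factorial_succ]
    congr 1
    omega
  rw [hif]
  have h3 : ((i-1-b).factorial:ℚ) ≠ 0 := by exact_mod_cast Nat.factorial_ne_zero _
  have h4 : ((a+b+1-i).factorial:ℚ) ≠ 0 := by exact_mod_cast Nat.factorial_ne_zero _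
  have h5 : ((i-1).factorial:ℚ) ≠ 0 := by exact_mod_cast Nat.factorial_ne_zero _
  have h6 : (b.factorial:ℚ) ≠ 0 := by exact_mod_cast Nat.factorial_ne_zero _
  have h7 : (i:ℚ) ≠ 0 := Nat.cast_ne_zero.mpr (by omega)
  push_cast
  field_simp

theorem key (a b v : ℕ) (hv : 1 ≤ v) :
    ∑ m ∈ Ioo 0 v, ((m:ℚ)^a / (a.factorial:ℚ)) * (((v:ℚ)-(m:ℚ))^b / (b.factorial:ℚ))
      = (v:ℚ)^(a+b+1) / ((a+b+1).factorial : ℚ)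
        + (∑ j ∈ Icc 1 (a+1), lam j (a+1) (b+1) * ((v:ℚ)^(j-1) / ((j-1).factorial : ℚ)))
        + (∑ j ∈ Icc 1 (b+1), lam j (b+1) (a+1) * ((v:ℚ)^(j-1) / ((j-1).factorial : ℚ))) := by
  have hA : (a.factorial:ℚ) ≠ 0 := by exact_mod_cast Nat.factorial_ne_zero _
  have hB : (b.factorial:ℚ) ≠ 0 := by exact_mod_cast Nat.factorial_ne_zero _
  -- LHS transformation
  have hlhs : ∑ m ∈ Ioo 0 v, ((m:ℚ)^a / (a.factorial:ℚ)) * (((v:ℚ)-(m:ℚ))^b / (b.factorial:ℚ))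
      = ∑ i ∈ range (a+b+2),
          (bernoulli i * cj a b i / ((a.factorial:ℚ) * (b.factorial:ℚ))
            - (if i = 1 then (if a = 0 then 1/(b.factorial:ℚ) else 0) else 0)) * (v:ℚ)^(a+b+1-i) := by
    have e1 : ∑ m ∈ Ioo 0 v, ((m:ℚ)^a / (a.factorial:ℚ)) * (((v:ℚ)-(m:ℚ))^b / (b.factorial:ℚ))
        = (∑ m ∈ Ioo 0 v, (m:ℚ)^a * ((v:ℚ)-(m:ℚ))^b) / ((a.factorial:ℚ) * (b.factorial:ℚ)) := by
      rw [Finset.sum_div]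
      apply Finset.sum_congr rfl
      intro m _
      ring
    have ecorr : (if a = 0 then (v:ℚ)^b else 0) / ((a.factorial:ℚ) * (b.factorial:ℚ))
        = ∑ i ∈ range (a+b+2),
            (if i = 1 then (if a = 0 then 1/(b.factorial:ℚ) else 0) else 0) * (v:ℚ)^(a+b+1-i) := by
      rw [Finset.sum_eq_single_of_mem 1 (Finset.mem_range.mpr (by omega))
        (fun i _ hi => by rw [if_neg hi]; ring)]
      rw [if_pos rfl]
      by_cases ha : a = 0
      · subst ha
        rw [if_pos rfl, if_pos rfl]
        simp only [Nat.factorial_zero]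
        rw [show 0+b+1-1 = b from by omega]
        push_cast
        ring
      · rw [if_neg ha, if_neg ha]
        ring
    rw [e1, lhs_eq a b v hv, sub_div, Finset.sum_div, ecorr, ← Finset.sum_sub_distrib]
    apply Finset.sum_congr rfl
    intro i _
    ring
  -- RHS transformation
  have hrhs : (v:ℚ)^(a+b+1) / ((a+b+1).factorial : ℚ)
        + (∑ j ∈ Icc 1 (a+1), lam j (a+1) (b+1) * ((v:ℚ)^(j-1) / ((j-1).factorial : ℚ)))
        + (∑ j ∈ Icc 1 (b+1), lam j (b+1) (a+1) * ((v:ℚ)^(j-1) / ((j-1).factorial : ℚ)))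
      = ∑ i ∈ range (a+b+2),
          ((if i = 0 then 1/((a+b+1).factorial:ℚ) else 0)
            + (if b+1 ≤ i then (-1:ℚ)^b * (((i-1).choose (i-1-b)):ℚ) * bernoulli i
                / ((i.factorial:ℚ) * ((a+b+1-i).factorial:ℚ)) else 0)
            + (if a+1 ≤ i then (-1:ℚ)^a * (((i-1).choose (i-1-a)):ℚ) * bernoulli i
                / ((i.factorial:ℚ) * ((a+b+1-i).factorial:ℚ)) else 0)) * (v:ℚ)^(a+b+1-i) := by
    have split : ∀ i ∈ range (a+b+2),
        ((if i = 0 then 1/((a+b+1).factorial:ℚ) else 0)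
            + (if b+1 ≤ i then (-1:ℚ)^b * (((i-1).choose (i-1-b)):ℚ) * bernoulli i
                / ((i.factorial:ℚ) * ((a+b+1-i).factorial:ℚ)) else 0)
            + (if a+1 ≤ i then (-1:ℚ)^a * (((i-1).choose (i-1-a)):ℚ) * bernoulli i
                / ((i.factorial:ℚ) * ((a+b+1-i).factorial:ℚ)) else 0)) * (v:ℚ)^(a+b+1-i)
        = (if i = 0 then (v:ℚ)^(a+b+1)/((a+b+1).factorial:ℚ) else 0)
          + (if b+1 ≤ i then lam (a+b+2-i) (a+1) (b+1)
              * ((v:ℚ)^((a+b+2-i)-1) / (((a+b+2-i)-1).factorial : ℚ)) else 0)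
          + (if a+1 ≤ i then lam (a+b+2-i) (b+1) (a+1)
              * ((v:ℚ)^((a+b+2-i)-1) / (((a+b+2-i)-1).factorial : ℚ)) else 0) := by
      intro i hi
      rw [Finset.mem_range] at hi
      rw [add_mul, add_mul]
      congr 1
      · congr 1
        · split_ifs with h
          · subst h; rw [show a+b+1-0 = a+b+1 from rfl]; ring
          · ring
        · split_ifs with h
          · rw [lam_eval a b i h (by omega),
                show (a+b+2-i)-1 = a+b+1-i from by omega]
            ring
          · ring
      · split_ifs with h
        · have := lam_eval b a i h (by omega)
          rw [show b+a+2-i = a+b+2-i from by omega] at this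
          rw [this, show (a+b+2-i)-1 = a+b+1-i from by omega]
          ring
        · ring
    rw [Finset.sum_congr rfl split]
    rw [Finset.sum_add_distrib, Finset.sum_add_distrib]
    congr 1
    congr 1
    · rw [Finset.sum_ite_eq' (range (a+b+2)) 0
        (fun _ => (v:ℚ)^(a+b+1)/((a+b+1).factorial:ℚ))]
      rw [if_pos (Finset.mem_range.mpr (by omega))]
    · rw [icc_reflect a b (fun j => lam j (a+1) (b+1) * ((v:ℚ)^(j-1) / ((j-1).factorial : ℚ)))]
    · rw [icc_reflect b a (fun j => lam j (b+1) (a+1) * ((v:ℚ)^(j-1) / ((j-1).factorial : ℚ)))]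
      rw [show b+a+2 = a+b+2 from by omega]
  rw [hlhs, hrhs]
  -- termwise identity
  apply Finset.sum_congr rfl
  intro i hi
  rw [Finset.mem_range] at hi
  congr 1
  rcases Nat.eq_zero_or_pos i with h0 | hpos
  · subst h0
    rw [cj_zero, bernoulli_zero]
    simp only [if_pos rfl, if_neg (by omega : ¬ b+1 ≤ 0), if_neg (by omega : ¬ a+1 ≤ 0),
      if_neg (by omega : (0:ℕ) ≠ 1)]
    field_simp
    simp [Nat.factorial_ne_zero]
  · rw [cj_pos a b i hpos]
    have hi7 : (i:ℚ) ≠ 0 := Nat.cast_ne_zero.mpr (by omega)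
    -- split into the two pieces
    have piece1 : bernoulli i * ((if b+1 ≤ i then (-1:ℚ)^b * (a.choose (i-1-b)) else 0))/(i:ℚ)
          / ((a.factorial:ℚ) * (b.factorial:ℚ))
        = (if b+1 ≤ i then (-1:ℚ)^b * (((i-1).choose (i-1-b)):ℚ) * bernoulli i
                / ((i.factorial:ℚ) * ((a+b+1-i).factorial:ℚ)) else 0) := by
      split_ifs with h
      · have hfid := fact_id a b i h (by omega)
        calc bernoulli i * ((-1:ℚ)^b * (a.choose (i-1-b)))/(i:ℚ) / ((a.factorial:ℚ) * (b.factorial:ℚ))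
            = bernoulli i * (-1:ℚ)^b * (((a.choose (i-1-b)):ℚ) / ((i:ℚ) * (a.factorial:ℚ) * (b.factorial:ℚ))) := by
              ring
          _ = bernoulli i * (-1:ℚ)^b * ((((i-1).choose (i-1-b)):ℚ) / ((i.factorial:ℚ) * ((a+b+1-i).factorial:ℚ))) := by
              rw [hfid]
          _ = (-1:ℚ)^b * (((i-1).choose (i-1-b)):ℚ) * bernoulli i
                / ((i.factorial:ℚ) * ((a+b+1-i).factorial:ℚ)) := by ring
      · simp
    have piece2 : bernoulli i * ((if a+1 ≤ i then (-1:ℚ)^(i-a) * (b.choose (i-1-a)) else 0))/(i:ℚ)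
          / ((a.factorial:ℚ) * (b.factorial:ℚ))
          - (if i = 1 then (if a = 0 then 1/(b.factorial:ℚ) else 0) else 0)
        = (if a+1 ≤ i then (-1:ℚ)^a * (((i-1).choose (i-1-a)):ℚ) * bernoulli i
                / ((i.factorial:ℚ) * ((a+b+1-i).factorial:ℚ)) else 0) := by
      by_cases h : a+1 ≤ i
      · rw [if_pos h, if_pos h]
        by_cases h1 : i = 1
        · subst h1
          have ha0 : a = 0 := by omega
          subst ha0
          rw [if_pos rfl, if_pos rfl]
          simp only [bernoulli_one]
          norm_num
          ring
        · -- i ≥ 2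
          rw [if_neg h1, sub_zero]
          rcases Nat.even_or_odd i with he | ho
          · have hsign : (-1:ℚ)^(i-a) = (-1:ℚ)^a := by
              have h2 : (-1:ℚ)^(i-a) * (-1:ℚ)^a = (-1:ℚ)^i := by
                rw [← pow_add, show i-a+a = i from by omega]
              have h3 : (-1:ℚ)^i = 1 := he.neg_one_pow
              have h4 : (-1:ℚ)^a * (-1:ℚ)^a = 1 := by
                rw [← pow_add, ← two_mul, pow_mul]; norm_num
              calc (-1:ℚ)^(i-a) = (-1:ℚ)^(i-a) * ((-1:ℚ)^a * (-1:ℚ)^a) := by rw [h4]; ring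
                _ = (-1:ℚ)^i * (-1:ℚ)^a := by rw [← mul_assoc, h2]
                _ = (-1:ℚ)^a := by rw [h3]; ring
            rw [hsign]
            have hfid := fact_id b a i h (by omega)
            rw [show b+a+1-i = a+b+1-i from by omega] at hfid
            calc bernoulli i * ((-1:ℚ)^a * (b.choose (i-1-a)))/(i:ℚ) / ((a.factorial:ℚ) * (b.factorial:ℚ))
                = bernoulli i * (-1:ℚ)^a * (((b.choose (i-1-a)):ℚ) / ((i:ℚ) * (b.factorial:ℚ) * (a.factorial:ℚ))) := by
                  ring
              _ = bernoulli i * (-1:ℚ)^a * ((((i-1).choose (i-1-a)):ℚ) / ((i.factorial:ℚ) * ((a+b+1-i).factorial:ℚ))) := by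
                  rw [hfid]
              _ = (-1:ℚ)^a * (((i-1).choose (i-1-a)):ℚ) * bernoulli i
                    / ((i.factorial:ℚ) * ((a+b+1-i).factorial:ℚ)) := by ring
          · have hz : bernoulli i = 0 := by
              rw [bernoulli_eq_bernoulli'_of_ne_one h1]
              exact bernoulli'_eq_zero_of_odd ho (by omega)
            rw [hz]
            simp
      · rw [if_neg h, if_neg h]
        have : ¬ (i = 1 ∧ a = 0) := by omega
        by_cases h1 : i = 1
        · rw [if_pos h1, if_neg (by omega : ¬ a = 0)]
          simp
        · rw [if_neg h1]
          simp
    rw [if_neg (by omega : ¬ i = 0), zero_add]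
    calc bernoulli i * (((if b+1 ≤ i then (-1:ℚ)^b * (a.choose (i-1-b)) else 0)
            + (if a+1 ≤ i then (-1:ℚ)^(i-a) * (b.choose (i-1-a)) else 0))/(i:ℚ))
          / ((a.factorial:ℚ) * (b.factorial:ℚ))
          - (if i = 1 then (if a = 0 then 1/(b.factorial:ℚ) else 0) else 0)
        = bernoulli i * ((if b+1 ≤ i then (-1:ℚ)^b * (a.choose (i-1-b)) else 0))/(i:ℚ)
            / ((a.factorial:ℚ) * (b.factorial:ℚ))
          + (bernoulli i * ((if a+1 ≤ i then (-1:ℚ)^(i-a) * (b.choose (i-1-a)) else 0))/(i:ℚ)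
            / ((a.factorial:ℚ) * (b.factorial:ℚ))
          - (if i = 1 then (if a = 0 then 1/(b.factorial:ℚ) else 0) else 0)) := by ring
      _ = _ := by rw [piece1, piece2]

theorem div_range (n m : ℕ) (hm : m ≤ n) (f : ℕ → ℚ) :
    ∑ u ∈ m.divisors, f (m / u)
      = ∑ u ∈ range (n+1), ∑ v ∈ range (n+1),
          (if 0 < u ∧ 0 < v ∧ u * v = m then f v else 0) := by
  rw [← Finset.sum_product']
  rw [← Finset.sum_filter]
  apply Finset.sum_nbij' (i := fun u => (u, m / u)) (j := fun p => p.1)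
  · intro u hu
    rw [Nat.mem_divisors] at hu
    obtain ⟨hd, hm0⟩ := hu
    have hu0 : 0 < u := Nat.pos_of_mem_divisors (Nat.mem_divisors.mpr ⟨hd, hm0⟩)
    have hle : u ≤ m := Nat.le_of_dvd (Nat.pos_of_ne_zero hm0) hd
    have hdiv : 0 < m / u := Nat.div_pos hle hu0
    have heq : u * (m / u) = m := Nat.mul_div_cancel' hd
    have hds : m / u ≤ m := Nat.div_le_self _ _
    simp only [Finset.mem_filter, Finset.mem_product, Finset.mem_range]
    refine ⟨⟨by omega, by omega⟩, hu0, hdiv, heq⟩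
  · intro p hp
    simp only [Finset.mem_filter, Finset.mem_product, Finset.mem_range] at hp
    obtain ⟨⟨h1, h2⟩, hu0, hv0, heq⟩ := hp
    rw [Nat.mem_divisors]
    constructor
    · exact ⟨p.2, heq.symm⟩
    · intro h; rw [h] at heq; simp at heq; omega
  · intro u hu; rfl
  · intro p hp
    simp only [Finset.mem_filter, Finset.mem_product, Finset.mem_range] at hp
    obtain ⟨⟨h1, h2⟩, hu0, hv0, heq⟩ := hp
    have : m / p.1 = p.2 := by
      rw [← heq, Nat.mul_div_cancel_left _ hu0]
    rw [Prod.ext_iff]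
    exact ⟨rfl, this⟩
  · intro u hu
    rfl

theorem ite_and_collapse (n : ℕ) (m1 m2 : ℕ) (x y : ℚ) (P Q : Prop)
    [Decidable P] [Decidable Q] :
    ∑ p ∈ Finset.HasAntidiagonal.antidiagonal n,
        (if P ∧ m1 = p.1 then x else 0) * (if Q ∧ m2 = p.2 then y else 0)
      = if P ∧ Q ∧ m1 + m2 = n then x * y else 0 := by
  by_cases hP : P
  · by_cases hQ : Q
    · have e1 : ∀ p ∈ Finset.HasAntidiagonal.antidiagonal n,
          (if P ∧ m1 = p.1 then x else 0) * (if Q ∧ m2 = p.2 then y else 0)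
          = if (m1, m2) = p then x * y else 0 := by
        intro p _
        rcases eq_or_ne (m1, m2) p with he | he
        · have h1 : m1 = p.1 := congrArg Prod.fst he
          have h2 : m2 = p.2 := congrArg Prod.snd he
          rw [if_pos ⟨hP, h1⟩, if_pos ⟨hQ, h2⟩, if_pos he]
        · rw [if_neg he]
          have hne : ¬(m1 = p.1) ∨ ¬(m2 = p.2) := by
            by_contra hc
            push_neg at hc
            exact he (Prod.ext hc.1 hc.2)
          rcases hne with h | h
          · rw [if_neg (show ¬(P ∧ m1 = p.1) from fun hh => h hh.2), zero_mul]
          · rw [if_neg (show ¬(Q ∧ m2 = p.2) from fun hh => h hh.2), mul_zero]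
      rw [Finset.sum_congr rfl e1, Finset.sum_ite_eq (Finset.HasAntidiagonal.antidiagonal n) (m1, m2)
        (fun _ => x * y)]
      by_cases h : m1 + m2 = n
      · rw [if_pos (Finset.HasAntidiagonal.mem_antidiagonal.mpr h), if_pos ⟨hP, hQ, h⟩]
      · rw [if_neg (fun hc => h (Finset.HasAntidiagonal.mem_antidiagonal.mp hc)), if_neg (by tauto)]
    · rw [if_neg (by tauto)]
      apply Finset.sum_eq_zero
      intro p _
      rw [if_neg (show ¬(Q ∧ m2 = p.2) from by tauto), mul_zero]
  · rw [if_neg (by tauto)]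
    apply Finset.sum_eq_zero
    intro p _
    rw [if_neg (show ¬(P ∧ m1 = p.1) from by tauto), zero_mul]

theorem diag2 (n u : ℕ) (f g : ℕ → ℚ) :
    ∑ v1 ∈ range (n+1), ∑ v2 ∈ range (n+1),
        (if 0 < u ∧ 0 < v1 ∧ 0 < v2 ∧ u*v1 + u*v2 = n then f v1 * g v2 else 0)
      = ∑ v ∈ range (n+1),
          (if 0 < u ∧ 0 < v ∧ u*v = n then ∑ m ∈ Ioo 0 v, f m * g (v-m) else 0) := by
  have rhs_expand : ∀ v ∈ range (n+1),
      (if 0 < u ∧ 0 < v ∧ u*v = n then ∑ m ∈ Ioo 0 v, f m * g (v-m) else 0)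
      = ∑ m ∈ range (n+1),
          (if (0 < u ∧ 0 < v ∧ u*v = n) ∧ 0 < m ∧ m < v then f m * g (v-m) else 0) := by
    intro v _
    by_cases hG : 0 < u ∧ 0 < v ∧ u*v = n
    · rw [if_pos hG]
      have hvn : v ≤ n := by
        calc v ≤ u * v := Nat.le_mul_of_pos_left v hG.1
          _ = n := hG.2.2
      have hIoo : Ioo 0 v = Finset.filter (fun m => 0 < m ∧ m < v) (range (n+1)) := by
        ext x; simp [Finset.mem_Ioo]; omega
      rw [hIoo, Finset.sum_filter]
      apply Finset.sum_congr rfl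
      intro m _
      split_ifs with h1 h2 h2 <;> first | rfl | (exfalso; tauto)
    · rw [if_neg hG]
      rw [eq_comm]
      apply Finset.sum_eq_zero
      intro m _
      rw [if_neg (by tauto)]
  rw [Finset.sum_congr rfl rhs_expand]
  rw [← Finset.sum_product', ← Finset.sum_product']
  rw [← Finset.sum_filter, ← Finset.sum_filter]
  apply Finset.sum_nbij' (i := fun p => (p.1 + p.2, p.1)) (j := fun q => (q.2, q.1 - q.2))
  · intro p hp
    simp only [Finset.mem_filter, Finset.mem_product, Finset.mem_range] at hp
    obtain ⟨⟨h1, h2⟩, hu, hv1, hv2, heq⟩ := hp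
    have hsum : u * (p.1 + p.2) = n := by rw [Nat.mul_add]; exact heq
    have hle : p.1 + p.2 ≤ n := by
      calc p.1 + p.2 ≤ u * (p.1 + p.2) := Nat.le_mul_of_pos_left _ hu
        _ = n := hsum
    simp only [Finset.mem_filter, Finset.mem_product, Finset.mem_range]
    exact ⟨⟨by omega, by omega⟩, ⟨hu, by omega, hsum⟩, by omega, by omega⟩
  · intro q hq
    simp only [Finset.mem_filter, Finset.mem_product, Finset.mem_range] at hq
    obtain ⟨⟨h1, h2⟩, ⟨hu, hv, heq⟩, hm, hmv⟩ := hq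
    simp only [Finset.mem_filter, Finset.mem_product, Finset.mem_range]
    refine ⟨⟨by omega, by omega⟩, hu, by omega, by omega, ?_⟩
    have : q.2 + (q.1 - q.2) = q.1 := by omega
    rw [← Nat.mul_add, this]
    exact heq
  · intro p hp
    simp only [Finset.mem_filter, Finset.mem_product, Finset.mem_range] at hp
    rw [Prod.ext_iff]
    constructor <;> simp <;> omega
  · intro q hq
    simp only [Finset.mem_filter, Finset.mem_product, Finset.mem_range] at hq
    rw [Prod.ext_iff]
    constructor <;> simp <;> omega
  · intro p hp
    simp only
    congr 2
    omega

theorem g2coeff (n ka kb : ℕ) :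
    (PowerSeries.coeff n) (g2 ka kb)
      = ∑ z ∈ (range (n+1)) ×ˢ (range (n+1)), ∑ w ∈ (range (n+1)) ×ˢ (range (n+1)),
          (if ((0 < z.1 ∧ 0 < z.2) ∧ (0 < w.1 ∧ 0 < w.2) ∧ z.1*z.2 + w.1*w.2 = n) ∧ z.1 < w.1
            then ((z.2:ℚ)^(ka-1)/(((ka-1).factorial):ℚ)) * ((w.2:ℚ)^(kb-1)/(((kb-1).factorial):ℚ))
            else 0) := by
  simp only [g2, gb2, PowerSeries.coeff_mk]
  have stepA : ∀ u1 ∈ range (n+1),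
      (∑ u2 ∈ range (n+1), ∑ v1 ∈ range (n+1), ∑ v2 ∈ range (n+1),
        if 0 < u1 ∧ u1 < u2 ∧ 0 < v1 ∧ 0 < v2 ∧ u1 * v1 + u2 * v2 = n then
          ((u1 : ℚ) ^ 0 / (Nat.factorial 0 : ℚ)) * ((u2 : ℚ) ^ 0 / (Nat.factorial 0 : ℚ)) *
          ((v1 : ℚ) ^ (ka - 1) / (Nat.factorial (ka - 1) : ℚ)) *
          ((v2 : ℚ) ^ (kb - 1) / (Nat.factorial (kb - 1) : ℚ))
        else 0)
      = ∑ v1 ∈ range (n+1), ∑ u2 ∈ range (n+1), ∑ v2 ∈ range (n+1),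
          (if ((0 < u1 ∧ 0 < v1) ∧ (0 < u2 ∧ 0 < v2) ∧ u1*v1 + u2*v2 = n) ∧ u1 < u2
            then ((v1:ℚ)^(ka-1)/(((ka-1).factorial):ℚ)) * ((v2:ℚ)^(kb-1)/(((kb-1).factorial):ℚ))
            else 0) := by
    intro u1 _
    rw [Finset.sum_comm]
    apply Finset.sum_congr rfl; intro v1 _
    apply Finset.sum_congr rfl; intro u2 _
    apply Finset.sum_congr rfl; intro v2 _
    by_cases hC : 0 < u1 ∧ u1 < u2 ∧ 0 < v1 ∧ 0 < v2 ∧ u1 * v1 + u2 * v2 = n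
    · rw [if_pos hC, if_pos (show ((0 < u1 ∧ 0 < v1) ∧ (0 < u2 ∧ 0 < v2) ∧ u1*v1 + u2*v2 = n) ∧ u1 < u2 from
        ⟨⟨⟨hC.1, hC.2.2.1⟩, ⟨by omega, hC.2.2.2.1⟩, hC.2.2.2.2⟩, hC.2.1⟩)]
      norm_num
    · rw [if_neg hC, if_neg (by tauto)]
  rw [Finset.sum_congr rfl stepA]
  rw [← Finset.sum_product']
  apply Finset.sum_congr rfl
  intro z _
  rw [← Finset.sum_product']

/-- The harmonic (stuffle) product formula for `g_{k₁}·g_{k₂}`. -/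
theorem stmt_4 (k1 k2 : ℕ) (h1 : 1 ≤ k1) (h2 : 1 ≤ k2) :
    g k1 * g k2 =
      g2 k1 k2 + g2 k2 k1 + g (k1 + k2)
        + ∑ j ∈ Finset.Icc 1 k1, lam j k1 k2 • g j
        + ∑ j ∈ Finset.Icc 1 k2, lam j k2 k1 • g j := by
  apply PowerSeries.ext; intro n
  -- coefficient of g k at m, packed form
  have hcoeff : ∀ m, m ≤ n → ∀ k, (PowerSeries.coeff m) (g k)
      = ∑ z ∈ (range (n+1)) ×ˢ (range (n+1)),
          (if (0 < z.1 ∧ 0 < z.2) ∧ z.1*z.2 = m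
            then (z.2:ℚ)^(k-1)/(((k-1).factorial):ℚ) else 0) := by
    intro m hm k
    have e0 : (PowerSeries.coeff m) (g k)
        = ∑ u ∈ m.divisors, ((m/u:ℕ):ℚ)^(k-1)/(((k-1).factorial):ℚ) := by
      simp [g, gb, PowerSeries.coeff_mk]
    rw [e0, div_range n m hm (fun v => (v:ℚ)^(k-1)/(((k-1).factorial):ℚ)),
      ← Finset.sum_product']
    apply Finset.sum_congr rfl
    intro z _
    rw [if_congr (and_assoc).symm rfl rfl]
  -- LHS
  have hL : (PowerSeries.coeff n) (g k1 * g k2)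
      = ∑ z ∈ (range (n+1)) ×ˢ (range (n+1)), ∑ w ∈ (range (n+1)) ×ˢ (range (n+1)),
          (if (0 < z.1 ∧ 0 < z.2) ∧ (0 < w.1 ∧ 0 < w.2) ∧ z.1*z.2 + w.1*w.2 = n
            then ((z.2:ℚ)^(k1-1)/(((k1-1).factorial):ℚ)) * ((w.2:ℚ)^(k2-1)/(((k2-1).factorial):ℚ))
            else 0) := by
    rw [PowerSeries.coeff_mul]
    have e1 : ∀ p ∈ Finset.HasAntidiagonal.antidiagonal n,
        (PowerSeries.coeff p.1) (g k1) * (PowerSeries.coeff p.2) (g k2)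
        = ∑ z ∈ (range (n+1)) ×ˢ (range (n+1)), ∑ w ∈ (range (n+1)) ×ˢ (range (n+1)),
            (if (0 < z.1 ∧ 0 < z.2) ∧ z.1*z.2 = p.1
              then (z.2:ℚ)^(k1-1)/(((k1-1).factorial):ℚ) else 0)
            * (if (0 < w.1 ∧ 0 < w.2) ∧ w.1*w.2 = p.2
              then (w.2:ℚ)^(k2-1)/(((k2-1).factorial):ℚ) else 0) := by
      intro p hp
      have hpn := Finset.HasAntidiagonal.mem_antidiagonal.mp hp
      rw [hcoeff p.1 (by omega) k1, hcoeff p.2 (by omega) k2, Finset.sum_mul_sum]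
    rw [Finset.sum_congr rfl e1, Finset.sum_comm]
    apply Finset.sum_congr rfl; intro z _
    rw [Finset.sum_comm]
    apply Finset.sum_congr rfl; intro w _
    exact ite_and_collapse n (z.1*z.2) (w.1*w.2) _ _ (0 < z.1 ∧ 0 < z.2) (0 < w.1 ∧ 0 < w.2)
  -- trichotomy
  have trich : ∀ (z w : ℕ×ℕ) (X : ℚ),
      (if (0 < z.1 ∧ 0 < z.2) ∧ (0 < w.1 ∧ 0 < w.2) ∧ z.1*z.2 + w.1*w.2 = n then X else 0)
      = (if ((0 < z.1 ∧ 0 < z.2) ∧ (0 < w.1 ∧ 0 < w.2) ∧ z.1*z.2 + w.1*w.2 = n) ∧ z.1 < w.1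
          then X else 0)
        + (if ((0 < z.1 ∧ 0 < z.2) ∧ (0 < w.1 ∧ 0 < w.2) ∧ z.1*z.2 + w.1*w.2 = n) ∧ w.1 < z.1
          then X else 0)
        + (if ((0 < z.1 ∧ 0 < z.2) ∧ (0 < w.1 ∧ 0 < w.2) ∧ z.1*z.2 + w.1*w.2 = n) ∧ z.1 = w.1
          then X else 0) := by
    intro z w X
    by_cases hD : (0 < z.1 ∧ 0 < z.2) ∧ (0 < w.1 ∧ 0 < w.2) ∧ z.1*z.2 + w.1*w.2 = n
    · rcases lt_trichotomy z.1 w.1 with h | h | h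
      · rw [if_pos hD, if_pos ⟨hD, h⟩, if_neg (fun hc => by omega),
          if_neg (fun hc => by omega)]
        ring
      · rw [if_pos hD, if_neg (fun hc => by omega), if_neg (fun hc => by omega),
          if_pos ⟨hD, h⟩]
        ring
      · rw [if_pos hD, if_neg (fun hc => by omega), if_pos ⟨hD, h⟩,
          if_neg (fun hc => by omega)]
        ring
    · rw [if_neg hD, if_neg (fun hc => hD hc.1), if_neg (fun hc => hD hc.1),
        if_neg (fun hc => hD hc.1)]
      ring
  have hLsplit : (PowerSeries.coeff n) (g k1 * g k2)
      = (∑ z ∈ (range (n+1)) ×ˢ (range (n+1)), ∑ w ∈ (range (n+1)) ×ˢ (range (n+1)),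
          (if ((0 < z.1 ∧ 0 < z.2) ∧ (0 < w.1 ∧ 0 < w.2) ∧ z.1*z.2 + w.1*w.2 = n) ∧ z.1 < w.1
            then ((z.2:ℚ)^(k1-1)/(((k1-1).factorial):ℚ)) * ((w.2:ℚ)^(k2-1)/(((k2-1).factorial):ℚ))
            else 0))
        + (∑ z ∈ (range (n+1)) ×ˢ (range (n+1)), ∑ w ∈ (range (n+1)) ×ˢ (range (n+1)),
          (if ((0 < z.1 ∧ 0 < z.2) ∧ (0 < w.1 ∧ 0 < w.2) ∧ z.1*z.2 + w.1*w.2 = n) ∧ w.1 < z.1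
            then ((z.2:ℚ)^(k1-1)/(((k1-1).factorial):ℚ)) * ((w.2:ℚ)^(k2-1)/(((k2-1).factorial):ℚ))
            else 0))
        + (∑ z ∈ (range (n+1)) ×ˢ (range (n+1)), ∑ w ∈ (range (n+1)) ×ˢ (range (n+1)),
          (if ((0 < z.1 ∧ 0 < z.2) ∧ (0 < w.1 ∧ 0 < w.2) ∧ z.1*z.2 + w.1*w.2 = n) ∧ z.1 = w.1
            then ((z.2:ℚ)^(k1-1)/(((k1-1).factorial):ℚ)) * ((w.2:ℚ)^(k2-1)/(((k2-1).factorial):ℚ))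
            else 0)) := by
    rw [hL]
    rw [Finset.sum_congr rfl (fun z _ => Finset.sum_congr rfl (fun w _ => trich z w _))]
    rw [Finset.sum_congr rfl (fun z (_ : z ∈ (range (n+1)) ×ˢ (range (n+1))) =>
      Finset.sum_add_distrib), Finset.sum_add_distrib]
    rw [Finset.sum_congr rfl (fun z (_ : z ∈ (range (n+1)) ×ˢ (range (n+1))) =>
      Finset.sum_add_distrib), Finset.sum_add_distrib]
  -- the greater-than piece is g2 k2 k1
  have hSgt : (∑ z ∈ (range (n+1)) ×ˢ (range (n+1)), ∑ w ∈ (range (n+1)) ×ˢ (range (n+1)),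
          (if ((0 < z.1 ∧ 0 < z.2) ∧ (0 < w.1 ∧ 0 < w.2) ∧ z.1*z.2 + w.1*w.2 = n) ∧ w.1 < z.1
            then ((z.2:ℚ)^(k1-1)/(((k1-1).factorial):ℚ)) * ((w.2:ℚ)^(k2-1)/(((k2-1).factorial):ℚ))
            else 0))
      = (PowerSeries.coeff n) (g2 k2 k1) := by
    rw [g2coeff n k2 k1, Finset.sum_comm]
    apply Finset.sum_congr rfl; intro z _
    apply Finset.sum_congr rfl; intro w _
    by_cases hC : ((0 < w.1 ∧ 0 < w.2) ∧ (0 < z.1 ∧ 0 < z.2) ∧ w.1*w.2 + z.1*z.2 = n) ∧ z.1 < w.1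
    · rw [if_pos hC, if_pos (show ((0 < z.1 ∧ 0 < z.2) ∧ (0 < w.1 ∧ 0 < w.2)
          ∧ z.1*z.2 + w.1*w.2 = n) ∧ z.1 < w.1 from
          ⟨⟨hC.1.2.1, hC.1.1, by linarith [hC.1.2.2]⟩, hC.2⟩)]
      ring
    · rw [if_neg hC, if_neg (fun hc => hC ⟨⟨hc.1.2.1, hc.1.1, by linarith [hc.1.2.2]⟩, hc.2⟩)]
  -- the diagonal piece
  have hSeq : (∑ z ∈ (range (n+1)) ×ˢ (range (n+1)), ∑ w ∈ (range (n+1)) ×ˢ (range (n+1)),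
          (if ((0 < z.1 ∧ 0 < z.2) ∧ (0 < w.1 ∧ 0 < w.2) ∧ z.1*z.2 + w.1*w.2 = n) ∧ z.1 = w.1
            then ((z.2:ℚ)^(k1-1)/(((k1-1).factorial):ℚ)) * ((w.2:ℚ)^(k2-1)/(((k2-1).factorial):ℚ))
            else 0))
      = ∑ u ∈ range (n+1), ∑ v ∈ range (n+1),
          (if 0 < u ∧ 0 < v ∧ u*v = n then
            ((v:ℚ)^(k1+k2-1) / ((k1+k2-1).factorial : ℚ)
              + (∑ j ∈ Icc 1 k1, lam j k1 k2 * ((v:ℚ)^(j-1) / ((j-1).factorial : ℚ)))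
              + (∑ j ∈ Icc 1 k2, lam j k2 k1 * ((v:ℚ)^(j-1) / ((j-1).factorial : ℚ))))
          else 0) := by
    have step1 : ∀ z ∈ (range (n+1)) ×ˢ (range (n+1)),
        (∑ w ∈ (range (n+1)) ×ˢ (range (n+1)),
          (if ((0 < z.1 ∧ 0 < z.2) ∧ (0 < w.1 ∧ 0 < w.2) ∧ z.1*z.2 + w.1*w.2 = n) ∧ z.1 = w.1
            then ((z.2:ℚ)^(k1-1)/(((k1-1).factorial):ℚ)) * ((w.2:ℚ)^(k2-1)/(((k2-1).factorial):ℚ))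
            else 0))
        = ∑ v2 ∈ range (n+1),
            (if (0 < z.1 ∧ 0 < z.2) ∧ (0 < z.1 ∧ 0 < v2) ∧ z.1*z.2 + z.1*v2 = n
              then ((z.2:ℚ)^(k1-1)/(((k1-1).factorial):ℚ)) * ((v2:ℚ)^(k2-1)/(((k2-1).factorial):ℚ))
              else 0) := by
      intro z hz
      have hz1 : z.1 ∈ range (n+1) := (Finset.mem_product.mp hz).1
      rw [Finset.sum_product, Finset.sum_comm]
      apply Finset.sum_congr rfl; intro v2 _
      have pt : ∀ u2 ∈ range (n+1),
          (if ((0 < z.1 ∧ 0 < z.2) ∧ (0 < u2 ∧ 0 < v2) ∧ z.1*z.2 + u2*v2 = n) ∧ z.1 = u2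
            then ((z.2:ℚ)^(k1-1)/(((k1-1).factorial):ℚ)) * ((v2:ℚ)^(k2-1)/(((k2-1).factorial):ℚ))
            else 0)
          = (if z.1 = u2 then
              (if (0 < z.1 ∧ 0 < z.2) ∧ (0 < u2 ∧ 0 < v2) ∧ z.1*z.2 + u2*v2 = n
                then ((z.2:ℚ)^(k1-1)/(((k1-1).factorial):ℚ)) * ((v2:ℚ)^(k2-1)/(((k2-1).factorial):ℚ))
                else 0) else 0) := by
        intro u2 _
        by_cases h : z.1 = u2
        · simp [h]
        · simp [h]
      rw [Finset.sum_congr rfl pt, Finset.sum_ite_eq (range (n+1)) z.1 _, if_pos hz1]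
    rw [Finset.sum_congr rfl step1, Finset.sum_product]
    apply Finset.sum_congr rfl; intro u _
    have reshape : ∀ v1 ∈ range (n+1),
        (∑ v2 ∈ range (n+1),
          (if (0 < u ∧ 0 < v1) ∧ (0 < u ∧ 0 < v2) ∧ u*v1 + u*v2 = n
            then ((v1:ℚ)^(k1-1)/(((k1-1).factorial):ℚ)) * ((v2:ℚ)^(k2-1)/(((k2-1).factorial):ℚ))
            else 0))
        = ∑ v2 ∈ range (n+1),
          (if 0 < u ∧ 0 < v1 ∧ 0 < v2 ∧ u*v1 + u*v2 = n
            then ((v1:ℚ)^(k1-1)/(((k1-1).factorial):ℚ)) * ((v2:ℚ)^(k2-1)/(((k2-1).factorial):ℚ))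
            else 0) := by
      intro v1 _
      apply Finset.sum_congr rfl; intro v2 _
      by_cases h : 0 < u ∧ 0 < v1 ∧ 0 < v2 ∧ u*v1 + u*v2 = n
      · rw [if_pos (by tauto), if_pos h]
      · rw [if_neg (by tauto), if_neg h]
    rw [Finset.sum_congr rfl reshape,
      diag2 n u (fun v => (v:ℚ)^(k1-1)/(((k1-1).factorial):ℚ))
        (fun v => (v:ℚ)^(k2-1)/(((k2-1).factorial):ℚ))]
    apply Finset.sum_congr rfl; intro v _
    by_cases hG : 0 < u ∧ 0 < v ∧ u*v = n
    · rw [if_pos hG, if_pos hG]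
      have conv : ∑ m ∈ Ioo 0 v,
          ((m:ℚ)^(k1-1)/(((k1-1).factorial):ℚ)) * ((((v-m : ℕ)):ℚ)^(k2-1)/(((k2-1).factorial):ℚ))
          = ∑ m ∈ Ioo 0 v,
            ((m:ℚ)^(k1-1)/(((k1-1).factorial):ℚ)) * (((v:ℚ)-(m:ℚ))^(k2-1)/(((k2-1).factorial):ℚ)) := by
        apply Finset.sum_congr rfl; intro m hm
        rw [Finset.mem_Ioo] at hm
        rw [Nat.cast_sub (by omega)]
      rw [conv, key (k1-1) (k2-1) v hG.2.1,
        show (k1-1)+(k2-1)+1 = k1+k2-1 from by omega,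
        Nat.sub_add_cancel h1, Nat.sub_add_cancel h2]
    · rw [if_neg hG, if_neg hG]
  -- RHS computation
  have hg3 : (PowerSeries.coeff n) (g (k1+k2))
      = ∑ z ∈ (range (n+1)) ×ˢ (range (n+1)),
          (if (0 < z.1 ∧ 0 < z.2) ∧ z.1*z.2 = n
            then (z.2:ℚ)^(k1+k2-1)/(((k1+k2-1).factorial):ℚ) else 0) :=
    hcoeff n le_rfl (k1+k2)
  have hlam : ∀ (c : ℕ → ℚ) (K : Finset ℕ),
      (∑ j ∈ K, c j * (PowerSeries.coeff n) (g j))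
      = ∑ z ∈ (range (n+1)) ×ˢ (range (n+1)),
          (if (0 < z.1 ∧ 0 < z.2) ∧ z.1*z.2 = n
            then (∑ j ∈ K, c j * ((z.2:ℚ)^(j-1)/(((j-1).factorial):ℚ))) else 0) := by
    intro c K
    rw [Finset.sum_congr rfl (fun j (_ : j ∈ K) => by
      rw [hcoeff n le_rfl j, Finset.mul_sum])]
    rw [Finset.sum_comm]
    apply Finset.sum_congr rfl; intro z _
    by_cases hC : (0 < z.1 ∧ 0 < z.2) ∧ z.1*z.2 = n
    · rw [if_pos hC]
      apply Finset.sum_congr rfl; intro j _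
      rw [if_pos hC]
    · rw [if_neg hC]
      apply Finset.sum_eq_zero; intro j _
      rw [if_neg hC, mul_zero]
  have hRHS : (PowerSeries.coeff n) (g2 k1 k2 + g2 k2 k1 + g (k1 + k2)
        + ∑ j ∈ Finset.Icc 1 k1, lam j k1 k2 • g j
        + ∑ j ∈ Finset.Icc 1 k2, lam j k2 k1 • g j)
      = (PowerSeries.coeff n) (g2 k1 k2) + (PowerSeries.coeff n) (g2 k2 k1)
        + ∑ u ∈ range (n+1), ∑ v ∈ range (n+1),
          (if 0 < u ∧ 0 < v ∧ u*v = n then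
            ((v:ℚ)^(k1+k2-1) / ((k1+k2-1).factorial : ℚ)
              + (∑ j ∈ Icc 1 k1, lam j k1 k2 * ((v:ℚ)^(j-1) / ((j-1).factorial : ℚ)))
              + (∑ j ∈ Icc 1 k2, lam j k2 k1 * ((v:ℚ)^(j-1) / ((j-1).factorial : ℚ))))
          else 0) := by
    simp only [map_add, map_sum, map_smul, smul_eq_mul]
    rw [hg3, hlam (fun j => lam j k1 k2) (Finset.Icc 1 k1),
      hlam (fun j => lam j k2 k1) (Finset.Icc 1 k2)]
    have grp : ∀ (A B C D E : ℚ), A + B + C + D + E = A + B + (C + D + E) :=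
      fun A B C D E => by ring
    rw [grp]
    congr 1
    rw [← Finset.sum_add_distrib, ← Finset.sum_add_distrib]
    rw [Finset.sum_product]
    apply Finset.sum_congr rfl; intro u _
    apply Finset.sum_congr rfl; intro v _
    by_cases hC : 0 < u ∧ 0 < v ∧ u*v = n
    · rw [if_pos (show (0 < u ∧ 0 < v) ∧ u*v = n from ⟨⟨hC.1, hC.2.1⟩, hC.2.2⟩),
        if_pos (show (0 < u ∧ 0 < v) ∧ u*v = n from ⟨⟨hC.1, hC.2.1⟩, hC.2.2⟩),
        if_pos (show (0 < u ∧ 0 < v) ∧ u*v = n from ⟨⟨hC.1, hC.2.1⟩, hC.2.2⟩),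
        if_pos hC]
    · rw [if_neg (show ¬((0 < u ∧ 0 < v) ∧ u*v = n) from by tauto),
        if_neg (show ¬((0 < u ∧ 0 < v) ∧ u*v = n) from by tauto),
        if_neg (show ¬((0 < u ∧ 0 < v) ∧ u*v = n) from by tauto),
        if_neg hC]
      ring
  rw [hLsplit, hSgt, hSeq, hRHS, ← g2coeff n k1 k2]
end

section
/- In ℚ[[q]] one has the partition relation in depth two: g^{(2,1)}_{1,1} = g_{2,3} + 3·g_{1,4}, where g^{(d_1,d_2)}_{k_1,k_2} is the double-indexed divisor series and g_{k_1,k_2} = g^{(0,0)}_{k_1,k_2}. -/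
open Finset PowerSeries

private lemma sum4 (n : ℕ) (f : ℕ → ℕ → ℕ → ℕ → ℚ) :
    (∑ u1 ∈ range (n+1), ∑ u2 ∈ range (n+1), ∑ v1 ∈ range (n+1), ∑ v2 ∈ range (n+1),
      f u1 u2 v1 v2)
    = ∑ p ∈ (range (n+1)) ×ˢ ((range (n+1)) ×ˢ ((range (n+1)) ×ˢ (range (n+1)))),
        f p.1 p.2.1 p.2.2.1 p.2.2.2 := by
  simp [Finset.sum_product]

/-- Partition relation in depth two: `g^{(2,1)}_{1,1} = g_{2,3} + 3 g_{1,4}`. -/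
theorem stmt_5 : gb2 2 1 1 1 = g2 2 3 + (3 : ℚ) • g2 1 4 := by
  ext n
  simp only [g2, gb2, map_add, map_smul, coeff_mk, smul_eq_mul]
  rw [sum4, sum4, sum4, Finset.mul_sum, ← Finset.sum_add_distrib]
  have hcomb : ∀ p : ℕ × ℕ × ℕ × ℕ,
      ((if 0 < p.1 ∧ p.1 < p.2.1 ∧ 0 < p.2.2.1 ∧ 0 < p.2.2.2 ∧
            p.1 * p.2.2.1 + p.2.1 * p.2.2.2 = n then
          ((p.1 : ℚ) ^ 0 / (Nat.factorial 0 : ℚ)) * ((p.2.1 : ℚ) ^ 0 / (Nat.factorial 0 : ℚ)) *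
          ((p.2.2.1 : ℚ) ^ (2 - 1) / (Nat.factorial (2 - 1) : ℚ)) *
          ((p.2.2.2 : ℚ) ^ (3 - 1) / (Nat.factorial (3 - 1) : ℚ))
        else 0)
        + 3 * (if 0 < p.1 ∧ p.1 < p.2.1 ∧ 0 < p.2.2.1 ∧ 0 < p.2.2.2 ∧
            p.1 * p.2.2.1 + p.2.1 * p.2.2.2 = n then
          ((p.1 : ℚ) ^ 0 / (Nat.factorial 0 : ℚ)) * ((p.2.1 : ℚ) ^ 0 / (Nat.factorial 0 : ℚ)) *
          ((p.2.2.1 : ℚ) ^ (1 - 1) / (Nat.factorial (1 - 1) : ℚ)) *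
          ((p.2.2.2 : ℚ) ^ (4 - 1) / (Nat.factorial (4 - 1) : ℚ))
        else 0))
      = (if 0 < p.1 ∧ p.1 < p.2.1 ∧ 0 < p.2.2.1 ∧ 0 < p.2.2.2 ∧
            p.1 * p.2.2.1 + p.2.1 * p.2.2.2 = n then
          (p.2.2.1 : ℚ) * (p.2.2.2 : ℚ)^2 / 2 + (p.2.2.2 : ℚ)^3 / 2
        else 0) := by
    intro p
    split_ifs <;> simp [Nat.factorial] <;> ring
  simp only [hcomb]
  have hL : ∀ p : ℕ × ℕ × ℕ × ℕ,
      (if 0 < p.1 ∧ p.1 < p.2.1 ∧ 0 < p.2.2.1 ∧ 0 < p.2.2.2 ∧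
            p.1 * p.2.2.1 + p.2.1 * p.2.2.2 = n then
          ((p.1 : ℚ) ^ 2 / (Nat.factorial 2 : ℚ)) * ((p.2.1 : ℚ) ^ 1 / (Nat.factorial 1 : ℚ)) *
          ((p.2.2.1 : ℚ) ^ (1 - 1) / (Nat.factorial (1 - 1) : ℚ)) *
          ((p.2.2.2 : ℚ) ^ (1 - 1) / (Nat.factorial (1 - 1) : ℚ))
        else 0)
      = (if 0 < p.1 ∧ p.1 < p.2.1 ∧ 0 < p.2.2.1 ∧ 0 < p.2.2.2 ∧
            p.1 * p.2.2.1 + p.2.1 * p.2.2.2 = n then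
          (p.1 : ℚ) ^ 2 * (p.2.1 : ℚ) / 2
        else 0) := by
    intro p
    split_ifs with h
    · simp [Nat.factorial]; ring
    · rfl
  simp only [hL]
  rw [← Finset.sum_filter, ← Finset.sum_filter]
  refine Finset.sum_nbij' (fun p => (p.2.2.2, p.2.2.1 + p.2.2.2, p.2.1 - p.1, p.1))
    (fun p => (p.2.2.2, p.2.2.1 + p.2.2.2, p.2.1 - p.1, p.1)) ?_ ?_ ?_ ?_ ?_
  · rintro ⟨u1, u2, v1, v2⟩ hp
    simp only [Finset.mem_filter, Finset.mem_product, Finset.mem_range] at hp ⊢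
    obtain ⟨⟨h1, h2, h3, h4⟩, hu1, h12, hv1, hv2, hsum⟩ := hp
    have e1 : v1 ≤ u1 * v1 := Nat.le_mul_of_pos_left v1 hu1
    have e2 : v2 ≤ u2 * v2 := Nat.le_mul_of_pos_left v2 (by omega)
    have e3 : u2 ≤ u2 * v2 := Nat.le_mul_of_pos_right u2 hv2
    refine ⟨⟨by omega, by omega, by omega, by omega⟩, by omega, by omega, by omega, by omega, ?_⟩
    obtain ⟨w, rfl⟩ : ∃ w, u2 = u1 + w := ⟨u2 - u1, by omega⟩
    rw [Nat.add_sub_cancel_left, ← hsum]; ring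
  · rintro ⟨u1, u2, v1, v2⟩ hp
    simp only [Finset.mem_filter, Finset.mem_product, Finset.mem_range] at hp ⊢
    obtain ⟨⟨h1, h2, h3, h4⟩, hu1, h12, hv1, hv2, hsum⟩ := hp
    have e1 : v1 ≤ u1 * v1 := Nat.le_mul_of_pos_left v1 hu1
    have e2 : v2 ≤ u2 * v2 := Nat.le_mul_of_pos_left v2 (by omega)
    have e3 : u2 ≤ u2 * v2 := Nat.le_mul_of_pos_right u2 hv2
    refine ⟨⟨by omega, by omega, by omega, by omega⟩, by omega, by omega, by omega, by omega, ?_⟩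
    obtain ⟨w, rfl⟩ : ∃ w, u2 = u1 + w := ⟨u2 - u1, by omega⟩
    rw [Nat.add_sub_cancel_left, ← hsum]; ring
  · rintro ⟨u1, u2, v1, v2⟩ hp
    simp only [Finset.mem_filter, Finset.mem_product, Finset.mem_range] at hp
    simp only [Prod.mk.injEq]
    exact ⟨trivial, by omega, by omega, trivial⟩
  · rintro ⟨u1, u2, v1, v2⟩ hp
    simp only [Finset.mem_filter, Finset.mem_product, Finset.mem_range] at hp
    simp only [Prod.mk.injEq]
    exact ⟨trivial, by omega, by omega, trivial⟩
  · rintro ⟨u1, u2, v1, v2⟩ hp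
    simp only [Finset.mem_filter, Finset.mem_product, Finset.mem_range] at hp
    have h12 : u1 ≤ u2 := le_of_lt hp.2.2.1
    simp only
    rw [Nat.cast_sub h12]
    push_cast
    ring
end

section
/- In ℚ[[q]] one has the relation 0 = g_5 − 2·g_{2,3} − 6·g_{1,4} − 3·g^{(1)}_4 + 3·g_4 − (1/12)·g_3, arising from comparing the two product expressions (stuffle and shuffle) for g_2 · g_3. -/
open Finset PowerSeries

def box4 (n : ℕ) : Finset (ℕ×ℕ×ℕ×ℕ) :=
  Finset.range (n+1) ×ˢ Finset.range (n+1) ×ˢ Finset.range (n+1) ×ˢ Finset.range (n+1)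

def Wset (n : ℕ) : Finset (ℕ×ℕ×ℕ×ℕ) :=
  (box4 n).filter fun p => 0 < p.1 ∧ 0 < p.2.1 ∧ 0 < p.2.2.1 ∧ 0 < p.2.2.2 ∧
    p.1 * p.2.2.1 + p.2.1 * p.2.2.2 = n

def Sset (n : ℕ) : Finset (ℕ×ℕ×ℕ×ℕ) :=
  (box4 n).filter fun p => 0 < p.1 ∧ p.1 < p.2.1 ∧ 0 < p.2.2.1 ∧ 0 < p.2.2.2 ∧
    p.1 * p.2.2.1 + p.2.1 * p.2.2.2 = n

lemma mem_Wset {n : ℕ} {p : ℕ×ℕ×ℕ×ℕ} : p ∈ Wset n ↔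
    0 < p.1 ∧ 0 < p.2.1 ∧ 0 < p.2.2.1 ∧ 0 < p.2.2.2 ∧
      p.1 * p.2.2.1 + p.2.1 * p.2.2.2 = n := by
  obtain ⟨u1, u2, v1, v2⟩ := p
  simp only [Wset, box4, mem_filter, mem_product, mem_range]
  constructor
  · rintro ⟨-, h⟩; exact h
  · rintro ⟨h1, h2, h3, h4, h5⟩
    have b1 : u1 ≤ u1 * v1 := Nat.le_mul_of_pos_right _ h3
    have b2 : u2 ≤ u2 * v2 := Nat.le_mul_of_pos_right _ h4
    have b3 : v1 ≤ u1 * v1 := Nat.le_mul_of_pos_left _ h1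
    have b4 : v2 ≤ u2 * v2 := Nat.le_mul_of_pos_left _ h2
    exact ⟨⟨by omega, by omega, by omega, by omega⟩, h1, h2, h3, h4, h5⟩

lemma mem_Sset {n : ℕ} {p : ℕ×ℕ×ℕ×ℕ} : p ∈ Sset n ↔
    0 < p.1 ∧ p.1 < p.2.1 ∧ 0 < p.2.2.1 ∧ 0 < p.2.2.2 ∧
      p.1 * p.2.2.1 + p.2.1 * p.2.2.2 = n := by
  obtain ⟨u1, u2, v1, v2⟩ := p
  simp only [Sset, box4, mem_filter, mem_product, mem_range]
  constructor
  · rintro ⟨-, h⟩; exact h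
  · rintro ⟨h1, h2, h3, h4, h5⟩
    have h2' : 0 < u2 := by omega
    have b1 : u1 ≤ u1 * v1 := Nat.le_mul_of_pos_right _ h3
    have b2 : u2 ≤ u2 * v2 := Nat.le_mul_of_pos_right _ h4
    have b3 : v1 ≤ u1 * v1 := Nat.le_mul_of_pos_left _ h1
    have b4 : v2 ≤ u2 * v2 := Nat.le_mul_of_pos_left _ h2'
    exact ⟨⟨by omega, by omega, by omega, by omega⟩, h1, h2, h3, h4, h5⟩

lemma Sset_eq_filter (n : ℕ) : Sset n = (Wset n).filter fun p => p.1 < p.2.1 := by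
  ext p
  simp only [mem_filter, mem_Wset, mem_Sset]
  constructor
  · rintro ⟨h1, h2, h3, h4, h5⟩; exact ⟨⟨h1, by omega, h3, h4, h5⟩, h2⟩
  · rintro ⟨⟨h1, h2, h3, h4, h5⟩, h6⟩; exact ⟨h1, h6, h3, h4, h5⟩

/-- split of the full sum by comparing u1, u2 -/
lemma sum_Wset_split (n : ℕ) (f : ℕ×ℕ×ℕ×ℕ → ℚ) :
    ∑ p ∈ Wset n, f p =
      ∑ p ∈ Sset n, f p + ∑ p ∈ Sset n, f (p.2.1, p.1, p.2.2.2, p.2.2.1)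
        + ∑ p ∈ (Wset n).filter (fun p => p.1 = p.2.1), f p := by
  have e0 : ∑ p ∈ Wset n, f p =
      ∑ p ∈ (Wset n).filter (fun p => p.1 < p.2.1), f p
      + (∑ p ∈ (Wset n).filter (fun p => ¬ p.1 < p.2.1 ∧ p.2.1 < p.1), f p
        + ∑ p ∈ (Wset n).filter (fun p => ¬ p.1 < p.2.1 ∧ ¬ p.2.1 < p.1), f p) := by
    rw [← Finset.sum_filter_add_sum_filter_not (Wset n) (fun p => p.1 < p.2.1) f,
      ← Finset.sum_filter_add_sum_filter_not ((Wset n).filter fun p => ¬ p.1 < p.2.1)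
        (fun p => p.2.1 < p.1) f, Finset.filter_filter, Finset.filter_filter]
  have e1 : ∑ p ∈ (Wset n).filter (fun p => p.1 < p.2.1), f p = ∑ p ∈ Sset n, f p := by
    rw [Sset_eq_filter]
  have e2 : ∑ p ∈ (Wset n).filter (fun p => ¬ p.1 < p.2.1 ∧ p.2.1 < p.1), f p
      = ∑ p ∈ Sset n, f (p.2.1, p.1, p.2.2.2, p.2.2.1) := by
    symm
    apply Finset.sum_nbij' (fun p => (p.2.1, p.1, p.2.2.2, p.2.2.1))
      (fun p : ℕ×ℕ×ℕ×ℕ => (p.2.1, p.1, p.2.2.2, p.2.2.1))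
    · rintro ⟨u1,u2,v1,v2⟩ hp
      simp only [mem_filter, mem_Wset, mem_Sset] at hp ⊢
      obtain ⟨h1,h2,h3,h4,h5⟩ := hp
      exact ⟨⟨by omega, h1, h4, h3, by omega⟩, by omega, by omega⟩
    · rintro ⟨u1,u2,v1,v2⟩ hp
      simp only [mem_filter, mem_Wset, mem_Sset] at hp ⊢
      obtain ⟨⟨h1,h2,h3,h4,h5⟩, h6, h7⟩ := hp
      exact ⟨h2, by omega, h4, h3, by omega⟩
    · rintro ⟨u1,u2,v1,v2⟩ _; rfl
    · rintro ⟨u1,u2,v1,v2⟩ _; rfl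
    · rintro ⟨u1,u2,v1,v2⟩ _; rfl
  have e3 : (Wset n).filter (fun p => ¬ p.1 < p.2.1 ∧ ¬ p.2.1 < p.1)
      = (Wset n).filter (fun p => p.1 = p.2.1) := by
    apply Finset.filter_congr
    intro p _
    constructor
    · rintro ⟨h1, h2⟩; omega
    · intro h; omega
  rw [e0, e1, e2, e3]; ring

/-- swap the roles of u's and v's in the full sum -/
lemma sum_Wset_swap (n : ℕ) (f : ℕ×ℕ×ℕ×ℕ → ℚ) :
    ∑ p ∈ Wset n, f p = ∑ p ∈ Wset n, f (p.2.2.1, p.2.2.2, p.1, p.2.1) := by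
  apply Finset.sum_nbij' (fun p : ℕ×ℕ×ℕ×ℕ => (p.2.2.1, p.2.2.2, p.1, p.2.1))
    (fun p : ℕ×ℕ×ℕ×ℕ => (p.2.2.1, p.2.2.2, p.1, p.2.1))
  · rintro ⟨u1,u2,v1,v2⟩ hp
    simp only [mem_Wset] at hp ⊢
    obtain ⟨h1,h2,h3,h4,h5⟩ := hp
    exact ⟨h3, h4, h1, h2, by rw [Nat.mul_comm v1 u1, Nat.mul_comm v2 u2]; exact h5⟩
  · rintro ⟨u1,u2,v1,v2⟩ hp
    simp only [mem_Wset] at hp ⊢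
    obtain ⟨h1,h2,h3,h4,h5⟩ := hp
    exact ⟨h3, h4, h1, h2, by rw [Nat.mul_comm v1 u1, Nat.mul_comm v2 u2]; exact h5⟩
  · rintro ⟨u1,u2,v1,v2⟩ _; rfl
  · rintro ⟨u1,u2,v1,v2⟩ _; rfl
  · rintro ⟨u1,u2,v1,v2⟩ _; rfl

/-- the conjugation (partition) involution on the ordered sum -/
lemma sum_Sset_conj (n : ℕ) (f : ℕ×ℕ×ℕ×ℕ → ℚ) :
    ∑ p ∈ Sset n, f p
      = ∑ p ∈ Sset n, f (p.2.2.2, p.2.2.1 + p.2.2.2, p.2.1 - p.1, p.1) := by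
  have key : ∀ p ∈ Sset n,
      (fun p : ℕ×ℕ×ℕ×ℕ => (p.2.2.2, p.2.2.1 + p.2.2.2, p.2.1 - p.1, p.1)) p ∈ Sset n := by
    rintro ⟨u1,u2,v1,v2⟩ hp
    simp only [mem_Sset] at hp ⊢
    obtain ⟨h1,h2,h3,h4,h5⟩ := hp
    refine ⟨h4, by omega, by omega, h1, ?_⟩
    obtain ⟨t, rfl⟩ := Nat.exists_eq_add_of_lt h2
    have e1 : u1 + t + 1 - u1 = t + 1 := by omega
    rw [e1]
    have e2 : v2 * (t + 1) + (v1 + v2) * u1 = u1 * v1 + (u1 + t + 1) * v2 := by ring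
    rw [e2, h5]
  symm
  apply Finset.sum_nbij' (fun p : ℕ×ℕ×ℕ×ℕ => (p.2.2.2, p.2.2.1 + p.2.2.2, p.2.1 - p.1, p.1))
    (fun p : ℕ×ℕ×ℕ×ℕ => (p.2.2.2, p.2.2.1 + p.2.2.2, p.2.1 - p.1, p.1))
  · exact key
  · exact key
  · rintro ⟨u1,u2,v1,v2⟩ hp
    simp only [mem_Sset] at hp
    simp only [Prod.mk.injEq]
    exact ⟨trivial, by omega, by omega, trivial⟩
  · rintro ⟨u1,u2,v1,v2⟩ hp
    simp only [mem_Sset] at hp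
    simp only [Prod.mk.injEq]
    exact ⟨trivial, by omega, by omega, trivial⟩
  · rintro ⟨u1,u2,v1,v2⟩ _; rfl

/-- the diagonal u1 = u2 part, reparametrized -/
lemma sum_diag (n : ℕ) (f : ℕ×ℕ×ℕ×ℕ → ℚ) :
    ∑ p ∈ (Wset n).filter (fun p => p.1 = p.2.1), f p
      = ∑ uv ∈ n.divisorsAntidiagonal, ∑ j ∈ Finset.Ico 1 uv.2,
          f (uv.1, uv.1, j, uv.2 - j) := by
  rw [← Finset.sum_sigma (n.divisorsAntidiagonal) (fun uv => Finset.Ico 1 uv.2)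
    (fun x => f (x.1.1, x.1.1, x.2, x.1.2 - x.2))]
  apply Finset.sum_nbij' (fun p : ℕ×ℕ×ℕ×ℕ => (⟨(p.1, p.2.2.1 + p.2.2.2), p.2.2.1⟩ :
      (_ : ℕ×ℕ) × ℕ))
    (fun x : (_ : ℕ×ℕ) × ℕ => (x.1.1, x.1.1, x.2, x.1.2 - x.2))
  · rintro ⟨u1,u2,v1,v2⟩ hp
    simp only [mem_filter, mem_Wset] at hp
    obtain ⟨⟨h1,h2,h3,h4,h5⟩, h6⟩ := hp
    subst h6
    simp only [Finset.mem_sigma, Nat.mem_divisorsAntidiagonal, Finset.mem_Ico]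
    have hmul : u1 * (v1 + v2) = n := by rw [Nat.mul_add]; exact h5
    have hpos : 0 < u1 * v1 := Nat.mul_pos h1 h3
    exact ⟨⟨hmul, by omega⟩, by omega, by omega⟩
  · rintro ⟨⟨u,v⟩,j⟩ hx
    simp only [Finset.mem_sigma, Nat.mem_divisorsAntidiagonal, Finset.mem_Ico] at hx
    obtain ⟨⟨h1, h2⟩, h3, h4⟩ := hx
    have hv : 0 < v := by omega
    have hu : 0 < u := by
      rcases Nat.eq_zero_or_pos u with h | h
      · exfalso; apply h2; rw [← h1, h, zero_mul]
      · exact h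
    simp only [mem_filter, mem_Wset]
    refine ⟨⟨hu, hu, by omega, by omega, ?_⟩, trivial⟩
    have hj : j + (v - j) = v := by omega
    calc u * j + u * (v - j) = u * (j + (v - j)) := by ring
      _ = n := by rw [hj, h1]
  · rintro ⟨u1,u2,v1,v2⟩ hp
    simp only [mem_filter, mem_Wset] at hp
    obtain ⟨⟨h1,h2,h3,h4,h5⟩, h6⟩ := hp
    simp only [Prod.mk.injEq]
    exact ⟨trivial, by omega, trivial, by omega⟩
  · rintro ⟨⟨u,v⟩,j⟩ hx
    simp only [Finset.mem_sigma, Nat.mem_divisorsAntidiagonal, Finset.mem_Ico] at hx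
    obtain ⟨⟨h1, h2⟩, h3, h4⟩ := hx
    have hj : j + (v - j) = v := by omega
    simp [hj]
  · rintro ⟨u1,u2,v1,v2⟩ hp
    simp only [mem_filter, mem_Wset] at hp
    obtain ⟨⟨h1,h2,h3,h4,h5⟩, h6⟩ := hp
    have e1 : v1 + v2 - v1 = v2 := by omega
    have e2 : u1 = u2 := h6
    dsimp only
    rw [e1, ← e2]

lemma qsum1 (v : ℕ) : ∑ i ∈ range v, (i:ℚ) = v*(v-1)/2 := by
  induction v with
  | zero => simp
  | succ m ih => rw [Finset.sum_range_succ, ih]; push_cast; ring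

lemma qsum2 (v : ℕ) : ∑ i ∈ range v, (i:ℚ)^2 = v*(v-1)*(2*v-1)/6 := by
  induction v with
  | zero => simp
  | succ m ih => rw [Finset.sum_range_succ, ih]; push_cast; ring

lemma qsum3 (v : ℕ) : ∑ i ∈ range v, (i:ℚ)^3 = v^2*(v-1)^2/4 := by
  induction v with
  | zero => simp
  | succ m ih => rw [Finset.sum_range_succ, ih]; push_cast; ring

lemma ico_to_range (v : ℕ) (F : ℕ → ℚ) (hF : F 0 = 0) :
    ∑ j ∈ Finset.Ico 1 v, F j = ∑ j ∈ Finset.range v, F j := by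
  apply Finset.sum_subset
  · intro x hx
    simp only [Finset.mem_Ico] at hx
    simp only [Finset.mem_range]
    omega
  · intro x hx hnx
    simp only [Finset.mem_range] at hx
    simp only [Finset.mem_Ico] at hnx
    have : x = 0 := by omega
    rw [this, hF]

lemma sumA (v : ℕ) :
    ∑ j ∈ Finset.Ico 1 v, (j:ℚ) * (((v - j : ℕ)):ℚ)^2 = ((v:ℚ)^4 - (v:ℚ)^2)/12 := by
  rw [ico_to_range v _ (by simp)]
  have step : ∀ j ∈ Finset.range v, (j:ℚ) * (((v - j : ℕ)):ℚ)^2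
      = (v:ℚ)^2 * (j:ℚ) - 2*(v:ℚ)*(j:ℚ)^2 + (j:ℚ)^3 := by
    intro j hj
    simp only [Finset.mem_range] at hj
    rw [Nat.cast_sub (le_of_lt hj)]
    ring
  rw [Finset.sum_congr rfl step]
  rw [Finset.sum_add_distrib, Finset.sum_sub_distrib, ← Finset.mul_sum, ← Finset.mul_sum,
    qsum1, qsum2, qsum3]
  ring

lemma sumB (v : ℕ) (hv : 1 ≤ v) (c : ℚ) :
    ∑ _j ∈ Finset.Ico 1 v, c = ((v:ℚ) - 1) * c := by
  rw [Finset.sum_const, Nat.card_Ico]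
  rw [nsmul_eq_mul]
  congr 1
  push_cast [hv]
  ring

lemma sum_AD_swap (n : ℕ) (F : ℕ → ℕ → ℚ) :
    ∑ uv ∈ n.divisorsAntidiagonal, F uv.1 uv.2
      = ∑ uv ∈ n.divisorsAntidiagonal, F uv.2 uv.1 := by
  apply Finset.sum_nbij' Prod.swap Prod.swap
  · rintro ⟨u,v⟩ huv
    simp only [Nat.mem_divisorsAntidiagonal] at huv ⊢
    exact ⟨by rw [Nat.mul_comm]; exact huv.1, huv.2⟩
  · rintro ⟨u,v⟩ huv
    simp only [Nat.mem_divisorsAntidiagonal] at huv ⊢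
    exact ⟨by rw [Nat.mul_comm]; exact huv.1, huv.2⟩
  · rintro ⟨u,v⟩ _; rfl
  · rintro ⟨u,v⟩ _; rfl
  · rintro ⟨u,v⟩ _; rfl

lemma master (n : ℕ) :
    ∑ uv ∈ n.divisorsAntidiagonal, ((uv.2:ℚ))^4
      = 24 * (∑ p ∈ Sset n, (p.2.2.1:ℚ) * (p.2.2.2:ℚ)^2)
        + 24 * (∑ p ∈ Sset n, (p.2.2.2:ℚ)^3)
        + 12 * (∑ uv ∈ n.divisorsAntidiagonal, (uv.1:ℚ) * (uv.2:ℚ)^3)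
        - 12 * (∑ uv ∈ n.divisorsAntidiagonal, ((uv.2:ℚ))^3)
        + ∑ uv ∈ n.divisorsAntidiagonal, ((uv.2:ℚ))^2 := by
  -- diagonal evaluations
  have hdiag1 : ∑ p ∈ (Wset n).filter (fun p => p.1 = p.2.1), ((p.2.2.1:ℚ) * (p.2.2.2:ℚ)^2)
      = (∑ uv ∈ n.divisorsAntidiagonal, ((uv.2:ℚ))^4) / 12
        - (∑ uv ∈ n.divisorsAntidiagonal, ((uv.2:ℚ))^2) / 12 := by
    rw [sum_diag n (fun p => (p.2.2.1:ℚ) * (p.2.2.2:ℚ)^2)]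
    have inner : ∀ uv ∈ n.divisorsAntidiagonal,
        (∑ j ∈ Finset.Ico 1 uv.2,
          (((uv.1, uv.1, j, uv.2 - j) : ℕ×ℕ×ℕ×ℕ).2.2.1:ℚ)
            * (((uv.1, uv.1, j, uv.2 - j) : ℕ×ℕ×ℕ×ℕ).2.2.2:ℚ)^2)
        = (uv.2:ℚ)^4/12 - (uv.2:ℚ)^2/12 := by
      intro uv _
      rw [sumA uv.2]
      ring
    rw [Finset.sum_congr rfl inner, Finset.sum_sub_distrib, Finset.sum_div, Finset.sum_div]
  have hdiag3 : ∑ p ∈ (Wset n).filter (fun p => p.1 = p.2.1), ((p.1:ℚ) * (p.2.1:ℚ)^2)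
      = (∑ uv ∈ n.divisorsAntidiagonal, (uv.1:ℚ) * (uv.2:ℚ)^3)
        - ∑ uv ∈ n.divisorsAntidiagonal, (uv.2:ℚ)^3 := by
    rw [sum_diag n (fun p => (p.1:ℚ) * (p.2.1:ℚ)^2)]
    have inner : ∀ uv ∈ n.divisorsAntidiagonal,
        (∑ j ∈ Finset.Ico 1 uv.2,
          (((uv.1, uv.1, j, uv.2 - j) : ℕ×ℕ×ℕ×ℕ).1:ℚ)
            * (((uv.1, uv.1, j, uv.2 - j) : ℕ×ℕ×ℕ×ℕ).2.1:ℚ)^2)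
        = (uv.2:ℚ) * (uv.1:ℚ)^3 - (uv.1:ℚ)^3 := by
      intro uv huv
      have hv : 1 ≤ uv.2 := by
        simp only [Nat.mem_divisorsAntidiagonal] at huv
        rcases Nat.eq_zero_or_pos uv.2 with h | h
        · exfalso; apply huv.2; rw [← huv.1, h, Nat.mul_zero]
        · exact h
      have step : ∀ j ∈ Finset.Ico 1 uv.2,
          (((uv.1, uv.1, j, uv.2 - j) : ℕ×ℕ×ℕ×ℕ).1:ℚ)
            * (((uv.1, uv.1, j, uv.2 - j) : ℕ×ℕ×ℕ×ℕ).2.1:ℚ)^2 = (uv.1:ℚ)^3 :=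
        fun j _ => by ring
      rw [Finset.sum_congr rfl step, sumB uv.2 hv]
      ring
    rw [Finset.sum_congr rfl inner, Finset.sum_sub_distrib]
    congr 1
    · exact sum_AD_swap n (fun x y => (y:ℚ) * (x:ℚ)^3)
    · exact sum_AD_swap n (fun x y => (x:ℚ)^3)
  -- the two splittings and the swap
  have hE1 := sum_Wset_split n (fun p => (p.2.2.1:ℚ) * (p.2.2.2:ℚ)^2)
  have hE3 := sum_Wset_split n (fun p => (p.1:ℚ) * (p.2.1:ℚ)^2)
  have hE2 := sum_Wset_swap n (fun p => (p.2.2.1:ℚ) * (p.2.2.2:ℚ)^2)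
  have hE4 := sum_Sset_conj n (fun p => (p.1:ℚ) * (p.2.1:ℚ)^2)
  have hE5 := sum_Sset_conj n (fun p => (p.1:ℚ)^2 * (p.2.1:ℚ))
  dsimp only at hE1 hE3 hE2 hE4 hE5
  have e4 : ∑ p ∈ Sset n, (p.2.2.2:ℚ) * (((p.2.2.1 + p.2.2.2 : ℕ)):ℚ)^2
      = ∑ p ∈ Sset n, (p.2.2.1:ℚ)^2 * (p.2.2.2:ℚ)
        + 2 * (∑ p ∈ Sset n, (p.2.2.1:ℚ) * (p.2.2.2:ℚ)^2)
        + ∑ p ∈ Sset n, (p.2.2.2:ℚ)^3 := by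
    have step : ∀ p ∈ Sset n, (p.2.2.2:ℚ) * (((p.2.2.1 + p.2.2.2 : ℕ)):ℚ)^2
        = (p.2.2.1:ℚ)^2 * (p.2.2.2:ℚ) + 2 * ((p.2.2.1:ℚ) * (p.2.2.2:ℚ)^2) + (p.2.2.2:ℚ)^3 := by
      intro p _
      push_cast
      ring
    rw [Finset.sum_congr rfl step, Finset.sum_add_distrib, Finset.sum_add_distrib,
      ← Finset.mul_sum]
  have e5 : ∑ p ∈ Sset n, (p.2.2.2:ℚ)^2 * (((p.2.2.1 + p.2.2.2 : ℕ)):ℚ)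
      = ∑ p ∈ Sset n, (p.2.2.1:ℚ) * (p.2.2.2:ℚ)^2 + ∑ p ∈ Sset n, (p.2.2.2:ℚ)^3 := by
    have step : ∀ p ∈ Sset n, (p.2.2.2:ℚ)^2 * (((p.2.2.1 + p.2.2.2 : ℕ)):ℚ)
        = (p.2.2.1:ℚ) * (p.2.2.2:ℚ)^2 + (p.2.2.2:ℚ)^3 := by
      intro p _
      push_cast
      ring
    rw [Finset.sum_congr rfl step, Finset.sum_add_distrib]
  have c1 : ∑ p ∈ Sset n, (p.2.2.2:ℚ) * (p.2.2.1:ℚ)^2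
      = ∑ p ∈ Sset n, (p.2.2.1:ℚ)^2 * (p.2.2.2:ℚ) :=
    Finset.sum_congr rfl (fun p _ => by ring)
  have c2 : ∑ p ∈ Sset n, (p.2.1:ℚ) * (p.1:ℚ)^2
      = ∑ p ∈ Sset n, (p.1:ℚ)^2 * (p.2.1:ℚ) :=
    Finset.sum_congr rfl (fun p _ => by ring)
  linarith [hE1, hE2, hE3, hE4, hE5, e4, e5, c1, c2, hdiag1, hdiag3]

lemma coeff_gb_s9 (d k n : ℕ) : (PowerSeries.coeff n) (gb d k)
    = ∑ uv ∈ n.divisorsAntidiagonal,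
        ((uv.1:ℚ)^d/(Nat.factorial d : ℚ)) * ((uv.2:ℚ)^(k-1)/(Nat.factorial (k-1) : ℚ)) := by
  simp only [gb, PowerSeries.coeff_mk]
  exact (Nat.sum_divisorsAntidiagonal
    (fun u v => ((u:ℚ)^d/(Nat.factorial d : ℚ)) * ((v:ℚ)^(k-1)/(Nat.factorial (k-1) : ℚ)))).symm

lemma coeff_gb2_s9 (k1 k2 n : ℕ) : (PowerSeries.coeff n) (gb2 0 0 k1 k2)
    = ∑ p ∈ Sset n,
        ((p.2.2.1:ℚ)^(k1-1)/(Nat.factorial (k1-1) : ℚ))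
          * ((p.2.2.2:ℚ)^(k2-1)/(Nat.factorial (k2-1) : ℚ)) := by
  simp only [gb2, PowerSeries.coeff_mk]
  have h1 : ∀ (G : ℕ×ℕ×ℕ×ℕ → ℚ), ∑ p ∈ box4 n, G p
      = ∑ u1 ∈ Finset.range (n+1), ∑ u2 ∈ Finset.range (n+1),
        ∑ v1 ∈ Finset.range (n+1), ∑ v2 ∈ Finset.range (n+1), G (u1,u2,v1,v2) := by
    intro G
    simp only [box4, Finset.sum_product]
  rw [Sset, Finset.sum_filter, h1]
  apply Finset.sum_congr rfl; intro u1 _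
  apply Finset.sum_congr rfl; intro u2 _
  apply Finset.sum_congr rfl; intro v1 _
  apply Finset.sum_congr rfl; intro v2 _
  dsimp only
  split
  · simp [Nat.factorial]
  · rfl


/-- The double-shuffle relation
`0 = g₅ − 2 g_{2,3} − 6 g_{1,4} − 3 g^{(1)}₄ + 3 g₄ − (1/12) g₃`. -/
theorem stmt_9 :
    (0 : PowerSeries ℚ) =
      g 5 - (2 : ℚ) • g2 2 3 - (6 : ℚ) • g2 1 4 - (3 : ℚ) • gb 1 4
        + (3 : ℚ) • g 4 - (1/12 : ℚ) • g 3 := by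
  ext n
  simp only [map_sub, map_add, map_smul, smul_eq_mul, map_zero]
  have Hg5 : (PowerSeries.coeff n) (g 5)
      = (1/24) * ∑ uv ∈ n.divisorsAntidiagonal, (uv.2:ℚ)^4 := by
    rw [g, coeff_gb_s9, Finset.mul_sum]
    exact Finset.sum_congr rfl (fun uv _ => by norm_num [Nat.factorial]; ring)
  have Hg4 : (PowerSeries.coeff n) (g 4)
      = (1/6) * ∑ uv ∈ n.divisorsAntidiagonal, (uv.2:ℚ)^3 := by
    rw [g, coeff_gb_s9, Finset.mul_sum]
    exact Finset.sum_congr rfl (fun uv _ => by norm_num [Nat.factorial]; ring)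
  have Hg3 : (PowerSeries.coeff n) (g 3)
      = (1/2) * ∑ uv ∈ n.divisorsAntidiagonal, (uv.2:ℚ)^2 := by
    rw [g, coeff_gb_s9, Finset.mul_sum]
    exact Finset.sum_congr rfl (fun uv _ => by norm_num [Nat.factorial]; ring)
  have Hgb14 : (PowerSeries.coeff n) (gb 1 4)
      = (1/6) * ∑ uv ∈ n.divisorsAntidiagonal, (uv.1:ℚ) * (uv.2:ℚ)^3 := by
    rw [coeff_gb_s9, Finset.mul_sum]
    exact Finset.sum_congr rfl (fun uv _ => by norm_num [Nat.factorial]; ring)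
  have H23 : (PowerSeries.coeff n) (g2 2 3)
      = (1/2) * ∑ p ∈ Sset n, (p.2.2.1:ℚ) * (p.2.2.2:ℚ)^2 := by
    rw [g2, coeff_gb2_s9, Finset.mul_sum]
    exact Finset.sum_congr rfl (fun p _ => by norm_num [Nat.factorial]; ring)
  have H14 : (PowerSeries.coeff n) (g2 1 4)
      = (1/6) * ∑ p ∈ Sset n, (p.2.2.2:ℚ)^3 := by
    rw [g2, coeff_gb2_s9, Finset.mul_sum]
    exact Finset.sum_congr rfl (fun p _ => by norm_num [Nat.factorial]; ring)
  rw [Hg5, Hg4, Hg3, Hgb14, H23, H14]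
  linarith [master n]
end

section
/- For every integer k ≥ 2, the limit as q → 1⁻ (q real, 0 < q < 1) of (1−q)^k · g_k(q) equals ζ(k), where g_k(q) = Σ_{u,v ≥ 1} (v^{k-1}/(k-1)!)·q^{uv} (the series converges absolutely for 0 < q < 1). -/
/-- The single zeta value `ζ(k) = Σ_{m ≥ 1} 1/m^k` as a real series. -/
noncomputable def zeta1 (k : ℕ) : ℝ :=
  ∑' m : ℕ, if 0 < m then 1 / (m : ℝ) ^ k else 0

/-- `g_k(q) = Σ_{u,v ≥ 1} (v^{k−1}/(k−1)!) q^{uv}` as a function of real `q`. -/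
noncomputable def gR (k : ℕ) (q : ℝ) : ℝ :=
  ∑' p : ℕ × ℕ,
    if 0 < p.1 ∧ 0 < p.2 then
      (p.2 : ℝ) ^ (k - 1) / (Nat.factorial (k - 1) : ℝ) * q ^ (p.1 * p.2)
    else 0

section Aux

open Filter Real Set Finset Function

lemma exp_half_bound {t : ℝ} (h0 : 0 ≤ t) (h1 : t ≤ 1) : t / 2 ≤ 1 - Real.exp (-t) := by
  have hE := Real.add_one_le_exp t
  have hEpos := Real.exp_pos t
  have hinv : Real.exp t * Real.exp (-t) = 1 := by rw [← Real.exp_add]; simp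
  nlinarith [hinv, hEpos, hE, Real.exp_pos (-t)]

lemma exp_neg_le_factorial_div {t : ℝ} (ht : 0 < t) (k : ℕ) :
    Real.exp (-t) ≤ (Nat.factorial k : ℝ) / t ^ k := by
  have h1 : t ^ k / (Nat.factorial k : ℝ) ≤ Real.exp t := by
    refine le_trans ?_ (Real.sum_le_exp_of_nonneg ht.le (k + 1))
    refine Finset.single_le_sum (f := fun i => t ^ i / (Nat.factorial i : ℝ)) ?_ ?_
    · intro i _; positivity
    · simp
  rw [Real.exp_neg, inv_le_comm₀ (Real.exp_pos t) (by positivity), inv_div]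
  exact h1

/-- Summability of the inner series. -/
lemma inner_summable (K : ℕ) {x : ℝ} (h0 : 0 ≤ x) (h1 : x < 1) :
    Summable (fun v : ℕ => if 0 < v then (v : ℝ) ^ K / (Nat.factorial K : ℝ) * x ^ v else 0) := by
  refine Summable.of_nonneg_of_le (fun v => ?_) (fun v => ?_)
    (((summable_pow_mul_geometric_of_norm_lt_one K
      (r := x) (by rwa [Real.norm_eq_abs, abs_of_nonneg h0])).div_const (Nat.factorial K : ℝ)))
  · split_ifs
    · positivity
    · exact le_refl _
  · split_ifs
    · rw [div_mul_eq_mul_div]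
    · positivity

lemma hasSum_upper (K : ℕ) {x : ℝ} (h0 : 0 ≤ x) (h1 : x < 1) :
    HasSum (fun v : ℕ => if 0 < v then ((v + K).choose K : ℝ) * x ^ v else 0)
      (1 / (1 - x) ^ (K + 1) - 1) := by
  have hx : ‖x‖ < 1 := by rwa [Real.norm_eq_abs, abs_of_nonneg h0]
  have h := (hasSum_choose_mul_geometric_of_norm_lt_one (𝕜 := ℝ) K hx).update 0 0
  have heq : Function.update (fun n : ℕ => ((n + K).choose K : ℝ) * x ^ n) 0 0
      = fun v : ℕ => if 0 < v then ((v + K).choose K : ℝ) * x ^ v else 0 := by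
    funext v
    rcases Nat.eq_zero_or_pos v with rfl | hv
    · simp
    · rw [Function.update_of_ne (by omega), if_pos hv]
  rw [heq] at h
  convert h using 1
  · rfl
  simp [Nat.choose_self]
  ring

lemma hasSum_lower (K : ℕ) (hK : 1 ≤ K) {x : ℝ} (h0 : 0 ≤ x) (h1 : x < 1) :
    HasSum (fun v : ℕ => if 0 < v then (v.choose K : ℝ) * x ^ v else 0)
      (x ^ K / (1 - x) ^ (K + 1)) := by
  have hx : ‖x‖ < 1 := by rwa [Real.norm_eq_abs, abs_of_nonneg h0]
  have base : HasSum ((fun v : ℕ => (v.choose K : ℝ) * x ^ v) ∘ (fun w : ℕ => w + K))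
      (x ^ K / (1 - x) ^ (K + 1)) := by
    have h := (hasSum_choose_mul_geometric_of_norm_lt_one (𝕜 := ℝ) K hx).mul_left (x ^ K)
    convert h using 1
    · rfl
    · funext w; simp only [Function.comp_apply, pow_add]; ring
    · rw [mul_one_div]
  have hinj : Function.Injective (fun w : ℕ => w + K) := add_left_injective K
  have hvanish : ∀ v ∉ Set.range (fun w : ℕ => w + K),
      (fun v : ℕ => (v.choose K : ℝ) * x ^ v) v = 0 := by
    intro v hv
    have : v < K := by
      by_contra h
      exact hv ⟨v - K, show v - K + K = v by omega⟩
    simp [Nat.choose_eq_zero_of_lt this]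
  have h2 : HasSum (fun v : ℕ => (v.choose K : ℝ) * x ^ v) (x ^ K / (1 - x) ^ (K + 1)) :=
    (hinj.hasSum_iff hvanish).mp base
  convert h2 using 1
  funext v
  rcases Nat.eq_zero_or_pos v with rfl | hv
  · simp [Nat.choose_eq_zero_of_lt (show 0 < K by omega)]
  · rw [if_pos hv]

lemma tsum_bounds (K : ℕ) (hK : 1 ≤ K) {x : ℝ} (h0 : 0 ≤ x) (h1 : x < 1) :
    x ^ K / (1 - x) ^ (K + 1)
      ≤ (∑' v : ℕ, if 0 < v then (v : ℝ) ^ K / (Nat.factorial K : ℝ) * x ^ v else 0)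
    ∧ (∑' v : ℕ, if 0 < v then (v : ℝ) ^ K / (Nat.factorial K : ℝ) * x ^ v else 0)
        ≤ 1 / (1 - x) ^ (K + 1) - 1 := by
  have hs := inner_summable K h0 h1
  have hup := hasSum_upper K h0 h1
  have hlo := hasSum_lower K hK h0 h1
  constructor
  · rw [← hlo.tsum_eq]
    refine Summable.tsum_le_tsum (fun v => ?_) hlo.summable hs
    split_ifs with h
    · have hd : (Nat.factorial K : ℝ) * (v.choose K : ℝ) ≤ (v : ℝ) ^ K := by
        have h3 := Nat.descFactorial_le_pow v K
        rw [Nat.descFactorial_eq_factorial_mul_choose] at h3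
        exact_mod_cast h3
      have hfac : (0:ℝ) < (Nat.factorial K : ℝ) := by positivity
      have hxv : (0:ℝ) ≤ x ^ v := by positivity
      have hcle : (v.choose K : ℝ) ≤ (v : ℝ) ^ K / (Nat.factorial K : ℝ) := by
        rw [le_div_iff₀ hfac]; nlinarith [hd]
      exact mul_le_mul_of_nonneg_right hcle hxv
    · exact le_refl _
  · rw [← hup.tsum_eq]
    refine Summable.tsum_le_tsum (fun v => ?_) hs hup.summable
    split_ifs with h
    · have h1n : v ^ K ≤ Nat.factorial K * ((v + K).choose K) := by
        have h2 := Nat.pow_sub_le_descFactorial (v + K) K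
        rw [show v + K + 1 - K = v + 1 by omega] at h2
        calc v ^ K ≤ (v + 1) ^ K := Nat.pow_le_pow_left (by omega) K
          _ ≤ (v + K).descFactorial K := h2
          _ = Nat.factorial K * ((v + K).choose K) :=
              Nat.descFactorial_eq_factorial_mul_choose _ _
      have hfac : (0:ℝ) < (Nat.factorial K : ℝ) := by positivity
      have hxv : (0:ℝ) ≤ x ^ v := by positivity
      have hcge : (v : ℝ) ^ K / (Nat.factorial K : ℝ) ≤ ((v + K).choose K : ℝ) := by
        rw [div_le_iff₀ hfac]
        calc (v : ℝ) ^ K ≤ ((Nat.factorial K * ((v + K).choose K) : ℕ) : ℝ) := by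
              exact_mod_cast h1n
          _ = ((v + K).choose K : ℝ) * (Nat.factorial K : ℝ) := by push_cast; ring
      exact mul_le_mul_of_nonneg_right hcge hxv
    · exact le_refl _

lemma slice_eq (K : ℕ) (u : ℕ) (hu : 0 < u) (q : ℝ) :
    (∑' v : ℕ, if 0 < u ∧ 0 < v then (v : ℝ) ^ K / (Nat.factorial K : ℝ) * q ^ (u * v) else 0)
      = ∑' v : ℕ, if 0 < v then (v : ℝ) ^ K / (Nat.factorial K : ℝ) * (q ^ u) ^ v else 0 := by
  refine tsum_congr fun v => ?_
  by_cases hv : 0 < v <;> simp [hu, hv, pow_mul]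

lemma pointwise_limit (k : ℕ) (hk : 2 ≤ k) (u : ℕ) :
    Tendsto (fun q : ℝ => (1 - q) ^ k *
        ∑' v : ℕ, if 0 < u ∧ 0 < v then
          (v : ℝ) ^ (k - 1) / (Nat.factorial (k - 1) : ℝ) * q ^ (u * v) else 0)
      (nhdsWithin 1 (Set.Ioo (0 : ℝ) 1)) (nhds (if 0 < u then 1 / (u : ℝ) ^ k else 0)) := by
  rcases Nat.eq_zero_or_pos u with rfl | hu
  · simp
  rw [if_pos hu]
  set K := k - 1 with hKdef
  have hkK : k = K + 1 := by omega
  set Sf : ℝ → ℝ := fun q => ∑ j ∈ Finset.range u, q ^ j with hSf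
  have hSf1 : Sf 1 = (u : ℝ) := by simp [hSf]
  have hScont : Continuous Sf := by
    exact continuous_finset_sum _ fun j _ => continuous_pow j
  have hune : ((u : ℝ)) ^ k ≠ 0 := by positivity
  have hlowT : Tendsto (fun q : ℝ => q ^ (u * K) / Sf q ^ k)
      (nhdsWithin 1 (Set.Ioo (0 : ℝ) 1)) (nhds (1 / (u : ℝ) ^ k)) := by
    have hc : ContinuousAt (fun q : ℝ => q ^ (u * K) / Sf q ^ k) 1 := by
      apply ContinuousAt.div
      · exact (continuous_pow _).continuousAt
      · exact (hScont.pow k).continuousAt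
      · simpa [hSf1] using hune
    have h2 := hc.tendsto.mono_left (nhdsWithin_le_nhds (s := Set.Ioo (0:ℝ) 1))
    simpa [hSf1] using h2
  have hupT : Tendsto (fun q : ℝ => 1 / Sf q ^ k - (1 - q) ^ k)
      (nhdsWithin 1 (Set.Ioo (0 : ℝ) 1)) (nhds (1 / (u : ℝ) ^ k)) := by
    have hc : ContinuousAt (fun q : ℝ => 1 / Sf q ^ k - (1 - q) ^ k) 1 := by
      apply ContinuousAt.sub
      · apply ContinuousAt.div
        · exact continuousAt_const
        · exact (hScont.pow k).continuousAt
        · simpa [hSf1] using hune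
      · fun_prop
    have h2 := hc.tendsto.mono_left (nhdsWithin_le_nhds (s := Set.Ioo (0:ℝ) 1))
    simpa [hSf1, zero_pow (show k ≠ 0 by omega)] using h2
  refine tendsto_of_tendsto_of_tendsto_of_le_of_le' hlowT hupT ?_ ?_
  · filter_upwards [self_mem_nhdsWithin] with q hq
    obtain ⟨hq0, hq1⟩ := hq
    have hx0 : (0 : ℝ) < q ^ u := by positivity
    have hx1 : q ^ u < 1 := pow_lt_one₀ hq0.le hq1 (by omega)
    have hT := (tsum_bounds K (by omega) hx0.le hx1).1
    rw [← slice_eq K u hu q] at hT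
    have h1q : (0 : ℝ) < 1 - q := by linarith
    have hfac : (1 - q) * Sf q = 1 - q ^ u := by
      have h := geom_sum_mul q u
      linear_combination -h
    have hSpos : (0 : ℝ) < Sf q := by
      nlinarith [hfac, sub_pos.mpr hx1]
    have hkey : (1 - q) ^ k * ((q ^ u) ^ K / (1 - q ^ u) ^ (K + 1))
        = q ^ (u * K) / Sf q ^ k := by
      rw [← hfac, hkK, mul_pow, pow_mul]
      field_simp
    calc q ^ (u * K) / Sf q ^ k
        = (1 - q) ^ k * ((q ^ u) ^ K / (1 - q ^ u) ^ (K + 1)) := hkey.symm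
      _ ≤ (1 - q) ^ k * _ := mul_le_mul_of_nonneg_left hT (by positivity)
  · filter_upwards [self_mem_nhdsWithin] with q hq
    obtain ⟨hq0, hq1⟩ := hq
    have hx0 : (0 : ℝ) < q ^ u := by positivity
    have hx1 : q ^ u < 1 := pow_lt_one₀ hq0.le hq1 (by omega)
    have hT := (tsum_bounds K (by omega) hx0.le hx1).2
    rw [← slice_eq K u hu q] at hT
    have h1q : (0 : ℝ) < 1 - q := by linarith
    have hfac : (1 - q) * Sf q = 1 - q ^ u := by
      have h := geom_sum_mul q u
      linear_combination -h
    have hSpos : (0 : ℝ) < Sf q := by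
      nlinarith [hfac, sub_pos.mpr hx1]
    have hkey : (1 - q) ^ k * (1 / (1 - q ^ u) ^ (K + 1) - 1)
        = 1 / Sf q ^ k - (1 - q) ^ k := by
      rw [← hfac, hkK, mul_pow]
      field_simp
    calc (1 - q) ^ k * _ ≤ (1 - q) ^ k * (1 / (1 - q ^ u) ^ (K + 1) - 1) :=
          mul_le_mul_of_nonneg_left hT (by positivity)
      _ = 1 / Sf q ^ k - (1 - q) ^ k := hkey

lemma uniform_bound (k : ℕ) (hk : 2 ≤ k) (u : ℕ) {q : ℝ} (hq0 : 0 < q) (hq1 : q < 1) :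
    |(1 - q) ^ k * ∑' v : ℕ, if 0 < u ∧ 0 < v then
        (v : ℝ) ^ (k - 1) / (Nat.factorial (k - 1) : ℝ) * q ^ (u * v) else 0|
      ≤ 2 ^ k * k * (Nat.factorial k : ℝ) / (u : ℝ) ^ k := by
  rcases Nat.eq_zero_or_pos u with rfl | hu
  · simp [zero_pow (show k ≠ 0 by omega)]
  set K := k - 1 with hKdef
  have hkK : k = K + 1 := by omega
  set x := q ^ u with hx
  have hx0 : (0 : ℝ) < x := by positivity
  have hx1 : x < 1 := pow_lt_one₀ hq0.le hq1 (by omega)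
  set ε := 1 - q with hε
  have hε0 : 0 < ε := by rw [hε]; linarith
  have hT := (tsum_bounds K (by omega) hx0.le hx1).2
  rw [← slice_eq K u hu q] at hT
  have hTnn : 0 ≤ ∑' v : ℕ, if 0 < u ∧ 0 < v then
      (v : ℝ) ^ K / (Nat.factorial K : ℝ) * q ^ (u * v) else 0 := by
    refine tsum_nonneg fun v => ?_
    split_ifs
    · positivity
    · exact le_refl _
  rw [abs_of_nonneg (mul_nonneg (by positivity) hTnn)]
  have h1xk : (0 : ℝ) < (1 - x) ^ k := by
    have : (0:ℝ) < 1 - x := by linarith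
    positivity
  have hb : 1 - (k : ℝ) * x ≤ (1 - x) ^ k := by
    have h := one_add_mul_le_pow (a := -x) (by linarith) k
    rw [show (1 : ℝ) + -x = 1 - x by ring] at h
    linarith
  have hstep1 : (∑' v : ℕ, if 0 < u ∧ 0 < v then
      (v : ℝ) ^ K / (Nat.factorial K : ℝ) * q ^ (u * v) else 0)
        ≤ (k : ℝ) * x / (1 - x) ^ k := by
    refine hT.trans ?_
    rw [← hkK]
    have heq : 1 / (1 - x) ^ k - 1 = (1 - (1 - x) ^ k) / (1 - x) ^ k := by
      field_simp
    rw [heq]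
    gcongr
    · linarith
  have hqle : q ≤ Real.exp (-ε) := by
    have h := Real.add_one_le_exp (-ε)
    rw [hε] at *
    linarith
  have hxle : x ≤ Real.exp (-((u : ℝ) * ε)) := by
    calc x = q ^ u := hx
      _ ≤ (Real.exp (-ε)) ^ u := pow_le_pow_left₀ hq0.le hqle u
      _ = Real.exp (-((u : ℝ) * ε)) := by rw [← Real.exp_nat_mul]; ring_nf
  set m := min 1 ((u : ℝ) * ε) / 2 with hm
  have huε : (0 : ℝ) < (u : ℝ) * ε := by positivity
  have hm0 : 0 < m := by
    rw [hm]
    have h1 : 0 < min 1 ((u : ℝ) * ε) := lt_min one_pos huε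
    linarith
  have hmle : m ≤ 1 - x := by
    rcases le_or_gt ((u : ℝ) * ε) 1 with hc | hc
    · rw [hm, min_eq_right hc]
      have h := exp_half_bound (t := (u : ℝ) * ε) huε.le hc
      linarith [hxle]
    · rw [hm, min_eq_left hc.le]
      have h2 : Real.exp (-((u : ℝ) * ε)) ≤ Real.exp (-1) := Real.exp_le_exp.mpr (by linarith)
      have h4 : (2 : ℝ) ≤ Real.exp 1 := by linarith [Real.add_one_le_exp 1]
      have h3 : Real.exp (-1) ≤ 1 / 2 := by
        rw [Real.exp_neg]
        nlinarith [Real.exp_pos 1, mul_inv_cancel₀ (ne_of_gt (Real.exp_pos 1)),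
          inv_pos.mpr (Real.exp_pos 1)]
      linarith [hxle]
  have hstep2 : ε ^ k * (∑' v : ℕ, if 0 < u ∧ 0 < v then
      (v : ℝ) ^ K / (Nat.factorial K : ℝ) * q ^ (u * v) else 0)
        ≤ ε ^ k * ((k : ℝ) * x / m ^ k) := by
    refine mul_le_mul_of_nonneg_left (hstep1.trans ?_) (by positivity)
    gcongr
  have hfac1 : (1 : ℝ) ≤ (Nat.factorial k : ℝ) := by
    exact_mod_cast Nat.one_le_iff_ne_zero.mpr (Nat.factorial_ne_zero k)
  refine hstep2.trans ?_
  rcases le_or_gt ((u : ℝ) * ε) 1 with hc | hc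
  · have hmeq : m = (u : ℝ) * ε / 2 := by rw [hm, min_eq_right hc]
    have hcalc : ε ^ k * ((k : ℝ) * x / m ^ k) = 2 ^ k * (k : ℝ) * x / (u : ℝ) ^ k := by
      rw [hmeq, div_pow, mul_pow]
      field_simp
      try ring
    rw [hcalc]
    gcongr
    exact hx1.le.trans hfac1
  · have hmeq : m = 1 / 2 := by rw [hm, min_eq_left hc.le]
    have hxk : x ≤ (Nat.factorial k : ℝ) / ((u : ℝ) * ε) ^ k :=
      hxle.trans (exp_neg_le_factorial_div huε k)
    have h5 : ε ^ k * ((k : ℝ) * x / m ^ k) = 2 ^ k * (k : ℝ) * x * ε ^ k := by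
      rw [hmeq, div_pow, one_pow]
      field_simp
      try ring
    rw [h5]
    calc 2 ^ k * (k : ℝ) * x * ε ^ k
        ≤ 2 ^ k * (k : ℝ) * ((Nat.factorial k : ℝ) / ((u : ℝ) * ε) ^ k) * ε ^ k := by
          gcongr
      _ = 2 ^ k * (k : ℝ) * (Nat.factorial k : ℝ) / (u : ℝ) ^ k := by
          rw [mul_pow]
          field_simp
          try ring

lemma fubini_step (k : ℕ) (hk : 2 ≤ k) {q : ℝ} (hq0 : 0 < q) (hq1 : q < 1) :
    (∑' p : ℕ × ℕ, if 0 < p.1 ∧ 0 < p.2 then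
        (p.2 : ℝ) ^ (k - 1) / (Nat.factorial (k - 1) : ℝ) * q ^ (p.1 * p.2) else 0)
      = ∑' u : ℕ, ∑' v : ℕ, if 0 < u ∧ 0 < v then
          (v : ℝ) ^ (k - 1) / (Nat.factorial (k - 1) : ℝ) * q ^ (u * v) else 0 := by
  set K := k - 1 with hKdef
  have hkK : k = K + 1 := by omega
  have hnn : ∀ p : ℕ × ℕ, 0 ≤ (if 0 < p.1 ∧ 0 < p.2 then
      (p.2 : ℝ) ^ K / (Nat.factorial K : ℝ) * q ^ (p.1 * p.2) else 0) := by
    intro p; split_ifs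
    · positivity
    · exact le_refl _
  have hslice : ∀ u : ℕ, Summable (fun v : ℕ => if 0 < u ∧ 0 < v then
      (v : ℝ) ^ K / (Nat.factorial K : ℝ) * q ^ (u * v) else 0) := by
    intro u
    rcases Nat.eq_zero_or_pos u with rfl | hu
    · exact summable_zero.congr fun v => by simp
    · have h := inner_summable K (x := q ^ u) (by positivity)
        (pow_lt_one₀ hq0.le hq1 (by omega))
      refine h.congr fun v => ?_
      by_cases hv : 0 < v <;> simp [hu, hv, pow_mul]
  have hgeo : Summable (fun u : ℕ => ((k : ℝ) / (1 - q) ^ k) * q ^ u) :=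
    (summable_geometric_of_lt_one hq0.le hq1).mul_left _
  have h1q : (0 : ℝ) < 1 - q := by linarith
  have hsum : Summable (fun p : ℕ × ℕ => if 0 < p.1 ∧ 0 < p.2 then
      (p.2 : ℝ) ^ K / (Nat.factorial K : ℝ) * q ^ (p.1 * p.2) else 0) := by
    refine (summable_prod_of_nonneg hnn).mpr ⟨fun u => hslice u, ?_⟩
    refine Summable.of_nonneg_of_le (fun u => tsum_nonneg fun v => hnn (u, v))
      (fun u => ?_) hgeo
    rcases Nat.eq_zero_or_pos u with rfl | hu
    · have hz : (∑' v : ℕ, if 0 < (0:ℕ) ∧ 0 < v then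
          (v : ℝ) ^ K / (Nat.factorial K : ℝ) * q ^ (0 * v) else 0) = 0 := by
        simp
      rw [hz]; positivity
    · set x := q ^ u with hx
      have hx0 : (0 : ℝ) < x := by positivity
      have hx1 : x < 1 := pow_lt_one₀ hq0.le hq1 (by omega)
      have hT := (tsum_bounds K (by omega) hx0.le hx1).2
      rw [← slice_eq K u hu q] at hT
      have h1xk : (0 : ℝ) < (1 - x) ^ k := by
        have : (0:ℝ) < 1 - x := by linarith
        positivity
      have hb : 1 - (k : ℝ) * x ≤ (1 - x) ^ k := by
        have h := one_add_mul_le_pow (a := -x) (by linarith) k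
        rw [show (1 : ℝ) + -x = 1 - x by ring] at h
        linarith
      have hstep1 : (∑' v : ℕ, if 0 < u ∧ 0 < v then
          (v : ℝ) ^ K / (Nat.factorial K : ℝ) * q ^ (u * v) else 0)
            ≤ (k : ℝ) * x / (1 - x) ^ k := by
        refine hT.trans ?_
        rw [← hkK]
        have heq : 1 / (1 - x) ^ k - 1 = (1 - (1 - x) ^ k) / (1 - x) ^ k := by
          field_simp
        rw [heq]
        gcongr
        · linarith
      refine hstep1.trans ?_
      have hxq : x ≤ q := by
        calc x = q ^ u := hx
          _ ≤ q ^ 1 := pow_le_pow_of_le_one hq0.le hq1.le (by omega)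
          _ = q := pow_one q
      have hd : (1 - q) ^ k ≤ (1 - x) ^ k := pow_le_pow_left₀ h1q.le (by linarith) k
      calc (k : ℝ) * x / (1 - x) ^ k ≤ (k : ℝ) * x / (1 - q) ^ k := by gcongr
        _ = ((k : ℝ) / (1 - q) ^ k) * x := by ring
  exact Summable.tsum_prod' hsum hslice

theorem stmt_11' (k : ℕ) (hk : 2 ≤ k) :
    Filter.Tendsto (fun q : ℝ => (1 - q) ^ k *
      ∑' p : ℕ × ℕ, if 0 < p.1 ∧ 0 < p.2 then
        (p.2 : ℝ) ^ (k - 1) / (Nat.factorial (k - 1) : ℝ) * q ^ (p.1 * p.2) else 0)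
      (nhdsWithin 1 (Set.Ioo (0 : ℝ) 1))
      (nhds (∑' m : ℕ, if 0 < m then 1 / (m : ℝ) ^ k else 0)) := by
  have hbound : Summable (fun u : ℕ => 2 ^ k * (k : ℝ) * (Nat.factorial k : ℝ) / (u : ℝ) ^ k) := by
    have h := Real.summable_one_div_nat_pow.mpr (show 1 < k by omega)
    refine (h.mul_left (2 ^ k * (k : ℝ) * (Nat.factorial k : ℝ))).congr fun u => ?_
    rw [mul_one_div]
  have hmain := tendsto_tsum_of_dominated_convergence
    (f := fun (q : ℝ) (u : ℕ) => (1 - q) ^ k * ∑' v : ℕ, if 0 < u ∧ 0 < v then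
      (v : ℝ) ^ (k - 1) / (Nat.factorial (k - 1) : ℝ) * q ^ (u * v) else 0)
    (g := fun u : ℕ => if 0 < u then 1 / (u : ℝ) ^ k else 0)
    hbound (pointwise_limit k hk) ?_
  · refine Tendsto.congr' ?_ hmain
    filter_upwards [self_mem_nhdsWithin] with q hq
    obtain ⟨hq0, hq1⟩ := hq
    rw [tsum_mul_left, ← fubini_step k hk hq0 hq1]
  · filter_upwards [self_mem_nhdsWithin] with q hq u
    rw [Real.norm_eq_abs]
    exact uniform_bound k hk u hq.1 hq.2


end Aux

/-- `lim_{q → 1⁻} (1−q)^k g_k(q) = ζ(k)` for `k ≥ 2`. -/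
theorem stmt_11 (k : ℕ) (hk : 2 ≤ k) :
    Filter.Tendsto (fun q : ℝ => (1 - q) ^ k * gR k q)
      (nhdsWithin 1 (Set.Ioo (0 : ℝ) 1)) (nhds (zeta1 k)) := by
  unfold zeta1 gR
  exact stmt_11' k hk
end
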